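/- arXiv:0803.1883 — 6 statements merged into one kernel-verified Lean document; each statement's English description precedes it below -/
import Mathlib

section
/- Let p > q be distinct odd primes and let G = A ⋊ Sym(q), where A = {(λ₁,...,λ_q) ∈ 𝔽_p^q : Σλᵢ = 0} with Sym(q) acting by permuting coordinates. Then A is the unique minimal normal subgroup of G. -/
open Equiv Multiplicative Polynomial

/-- Coordinate-permutation automorphism of the base group. -/
def permAut (p q : ℕ) (σ : Equiv.Perm (Fin q)) :
    MulAut (Fin q → Multiplicative (ZMod p)) where
  toFun v := v ∘ σ.symm
  invFun v := v ∘ σ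
  left_inv v := by funext i; simp
  right_inv v := by funext i; simp
  map_mul' v w := rfl

/-- The action of `Sym(q)` on the base group of the wreath product. -/
def wreathAct (p q : ℕ) :
    Equiv.Perm (Fin q) →* MulAut (Fin q → Multiplicative (ZMod p)) where
  toFun := permAut p q
  map_one' := rfl
  map_mul' σ τ := rfl

/-- The wreath product `C_p ≀ Sym(q)`. -/
abbrev Wreath (p q : ℕ) :=
  (Fin q → Multiplicative (ZMod p)) ⋊[wreathAct p q] Equiv.Perm (Fin q)

/-- The complex reflection group `G(p,p,q)` as a subgroup of `C_p ≀ Sym(q)`. -/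
def Gppq (p q : ℕ) : Subgroup (Wreath p q) where
  carrier := {g | ∑ i, Multiplicative.toAdd (g.left i) = 0}
  one_mem' := by simp
  mul_mem' := by
    intro a b ha hb
    simp only [Set.mem_setOf_eq, SemidirectProduct.mul_left] at *
    have : ∑ i, toAdd ((wreathAct p q a.right b.left) i) = 0 := by
      have := Equiv.sum_comp a.right.symm (fun i => toAdd (b.left i))
      exact this.trans hb
    simp [Pi.mul_apply, toAdd_mul, Finset.sum_add_distrib, ha, this]
  inv_mem' := by
    intro a ha
    simp only [Set.mem_setOf_eq, SemidirectProduct.inv_left] at *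
    have h := Equiv.sum_comp a.right (fun i => toAdd (a.left⁻¹ i))
    have h2 : ∑ i, toAdd (a.left⁻¹ i) = 0 := by
      simp [toAdd_inv, Finset.sum_neg_distrib, ha]
    simp only [wreathAct, permAut, map_inv]
    exact h.trans h2


/-- The base subgroup `A` inside `G(p,p,q)`. -/
def Abase (p q : ℕ) : Subgroup (Gppq p q) where
  carrier := {g | (g : Wreath p q).right = 1}
  one_mem' := rfl
  mul_mem' := by
    intro a b ha hb
    simp only [Set.mem_setOf_eq] at *
    simp [Subgroup.coe_mul, SemidirectProduct.mul_right, ha, hb]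
  inv_mem' := by
    intro a ha
    simp only [Set.mem_setOf_eq] at *
    simp [ha]


namespace Gaux

variable (p q : ℕ)

/-- base element of the wreath product from an additive vector -/
def mkW (v : Fin q → ZMod p) : Wreath p q := ⟨fun i => Multiplicative.ofAdd (v i), 1⟩

lemma mkW_mem (v : Fin q → ZMod p) (h : ∑ i, v i = 0) : mkW p q v ∈ Gppq p q := by
  simpa [Gppq, mkW] using h

/-- element of Gppq from a sum-zero vector -/
def elemA (v : Fin q → ZMod p) (h : ∑ i, v i = 0) : Gppq p q := ⟨mkW p q v, mkW_mem p q v h⟩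

lemma mkW_mul (v w : Fin q → ZMod p) : mkW p q (v + w) = mkW p q v * mkW p q w := by
  ext i
  · simp only [SemidirectProduct.mul_left, SemidirectProduct.inv_left, SemidirectProduct.mul_right,
      SemidirectProduct.inv_right]
    simp [mkW, wreathAct, permAut, SemidirectProduct.mul_left, -SemidirectProduct.mk_eq_inl_mul_inr]
  · simp [mkW, SemidirectProduct.mul_right]

lemma mkW_inv (v : Fin q → ZMod p) : mkW p q (-v) = (mkW p q v)⁻¹ := by
  ext i
  · simp only [SemidirectProduct.mul_left, SemidirectProduct.inv_left, SemidirectProduct.mul_right,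
      SemidirectProduct.inv_right]
    simp [mkW, wreathAct, permAut, SemidirectProduct.inv_left, -SemidirectProduct.mk_eq_inl_mul_inr]
  · simp [mkW, SemidirectProduct.inv_right]

lemma mkW_zero : mkW p q 0 = 1 := by
  ext i
  · simp [mkW]
  · simp [mkW]

/-- permutation element of the wreath product -/
def permW (σ : Equiv.Perm (Fin q)) : Wreath p q := ⟨1, σ⟩

lemma permW_mem (σ : Equiv.Perm (Fin q)) : permW p q σ ∈ Gppq p q := by
  simp [Gppq, permW]

lemma wreathAct_apply (σ : Equiv.Perm (Fin q)) (v : Fin q → Multiplicative (ZMod p)) :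
    wreathAct p q σ v = v ∘ σ.symm := rfl

def elemP (σ : Equiv.Perm (Fin q)) : Gppq p q := ⟨permW p q σ, permW_mem p q σ⟩

lemma conj_perm (σ : Equiv.Perm (Fin q)) (v : Fin q → ZMod p) :
    permW p q σ * mkW p q v * (permW p q σ)⁻¹ = mkW p q (v ∘ σ.symm) := by
  ext i
  · simp only [SemidirectProduct.mul_left, SemidirectProduct.inv_left, SemidirectProduct.mul_right,
      SemidirectProduct.inv_right]
    simp [mkW, permW, wreathAct_apply, SemidirectProduct.mul_left, SemidirectProduct.inv_left,
      -SemidirectProduct.mk_eq_inl_mul_inr]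
  · simp [mkW, permW, SemidirectProduct.mul_right, SemidirectProduct.inv_right]

lemma comm_base (n : Wreath p q) (w : Fin q → ZMod p) :
    mkW p q w * n * (mkW p q w)⁻¹ * n⁻¹ = mkW p q (w - w ∘ n.right.symm) := by
  ext i
  · simp only [SemidirectProduct.mul_left, SemidirectProduct.inv_left, SemidirectProduct.mul_right,
      SemidirectProduct.inv_right]
    simp [mkW, wreathAct_apply, SemidirectProduct.mul_left, SemidirectProduct.inv_left,
      Equiv.Perm.inv_def, Equiv.symm_symm, Equiv.apply_symm_apply,
      sub_eq_add_neg, mul_comm, mul_assoc, mul_left_comm, -SemidirectProduct.mk_eq_inl_mul_inr]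
  · simp [mkW, SemidirectProduct.mul_right, SemidirectProduct.inv_right]

variable {p q}

/-- The additive subgroup of vectors whose corresponding element lies in N. -/
def Wgrp (N : Subgroup (Gppq p q)) : AddSubgroup (Fin q → ZMod p) where
  carrier := {v | ∃ h : ∑ i, v i = 0, elemA p q v h ∈ N}
  zero_mem' := ⟨by simp, by
    have : elemA p q 0 (by simp) = 1 := Subtype.ext (mkW_zero p q)
    rw [this]; exact N.one_mem⟩
  add_mem' := by
    rintro v w ⟨hv, mv⟩ ⟨hw, mw⟩
    refine ⟨by simp [Finset.sum_add_distrib, hv, hw], ?_⟩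
    have : elemA p q (v + w) (by simp [Finset.sum_add_distrib, hv, hw]) =
        elemA p q v hv * elemA p q w hw := Subtype.ext (mkW_mul p q v w)
    rw [this]; exact N.mul_mem mv mw
  neg_mem' := by
    rintro v ⟨hv, mv⟩
    refine ⟨by simp [Finset.sum_neg_distrib, hv], ?_⟩
    have : elemA p q (-v) (by simp [Finset.sum_neg_distrib, hv]) =
        (elemA p q v hv)⁻¹ := Subtype.ext (mkW_inv p q v)
    rw [this]; exact N.inv_mem mv

lemma Wgrp_perm {N : Subgroup (Gppq p q)} (hN : N.Normal) (σ : Equiv.Perm (Fin q))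
    {v : Fin q → ZMod p} (hv : v ∈ Wgrp N) : v ∘ σ.symm ∈ Wgrp N := by
  obtain ⟨h, m⟩ := hv
  have hs : ∑ i, (v ∘ σ.symm) i = 0 := by
    have := Equiv.sum_comp σ.symm v; simpa [this] using h
  refine ⟨hs, ?_⟩
  have key : elemA p q (v ∘ σ.symm) hs =
      elemP p q σ * elemA p q v h * (elemP p q σ)⁻¹ := by
    apply Subtype.ext
    push_cast
    exact (conj_perm p q σ v).symm
  rw [key]
  exact hN.conj_mem _ m _

lemma Wgrp_smul {N : Subgroup (Gppq p q)} [Fact p.Prime] (c : ZMod p)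
    {v : Fin q → ZMod p} (hv : v ∈ Wgrp N) : c • v ∈ Wgrp N := by
  have : c • v = c.val • v := by
    rw [← Nat.cast_smul_eq_nsmul (ZMod p)]
    congr 1
    exact (ZMod.natCast_rightInverse c).symm
  rw [this]
  exact AddSubgroup.nsmul_mem _ hv _

lemma sum_single_sub (i j : Fin q) :
    ∑ k, (Pi.single i 1 - Pi.single j 1 : Fin q → ZMod p) k = 0 := by
  simp [Finset.sum_sub_distrib, Finset.sum_pi_single']

lemma exists_mem_Wgrp {N : Subgroup (Gppq p q)} [Fact p.Prime] (hN : N.Normal)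
    (hNbot : N ≠ ⊥) (hq3 : 3 ≤ q) : ∃ v : Fin q → ZMod p, v ≠ 0 ∧ v ∈ Wgrp N := by
  haveI : Nontrivial N := (Subgroup.nontrivial_iff_ne_bot N).mpr hNbot
  obtain ⟨m0, hm1⟩ := exists_ne (1 : N)
  obtain ⟨⟨n, hnG⟩, hnN⟩ := m0
  have hn1' : n ≠ 1 := by
    intro h; exact hm1 (Subtype.ext (Subtype.ext h))
  by_cases hr : n.right = 1
  · refine ⟨fun i => toAdd (n.left i), ?_, hnG, ?_⟩
    · intro h0
      apply hn1'
      have : n = mkW p q (fun i => toAdd (n.left i)) := by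
        ext k
        · simp [mkW]
        · simp [mkW, hr]
      rw [this, h0, mkW_zero]
    · have : elemA p q _ hnG = (⟨n, hnG⟩ : Gppq p q) := by
        apply Subtype.ext
        show mkW p q _ = n
        ext k
        · simp [mkW]
        · simp [mkW, hr]
      rw [this]; exact hnN
  · set σ := n.right with hσdef
    have hσ : σ ≠ 1 := hr
    obtain ⟨i, hi⟩ : ∃ i, σ i ≠ i := by
      by_contra h; push_neg at h
      exact hσ (Equiv.ext h)
    obtain ⟨j, hji, hjσ⟩ : ∃ j, j ≠ i ∧ j ≠ σ i := by
      by_contra h; push_neg at h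
      have hsub : (Finset.univ : Finset (Fin q)) ⊆ {i, σ i} := by
        intro k _
        rcases Classical.em (k = i) with h1 | h1
        · simp [h1]
        · simp [h k h1]
      have hc := Finset.card_le_card hsub
      simp at hc
      have h2 : ({i, σ i} : Finset (Fin q)).card ≤ 2 :=
        (Finset.card_insert_le _ _).trans (by simp)
      omega
    set w : Fin q → ZMod p := Pi.single i 1 - Pi.single j 1 with hwdef
    have hw : ∑ k, w k = 0 := sum_single_sub i j
    set a : Gppq p q := elemA p q w hw with hadef
    set nn : Gppq p q := ⟨n, hnG⟩ with hnndef
    have hmN : a * nn * a⁻¹ * nn⁻¹ ∈ N :=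
      N.mul_mem (hN.conj_mem _ hnN a) (N.inv_mem hnN)
    have h2 := Equiv.sum_comp σ.symm w
    have hvsum : ∑ k, (w - w ∘ σ.symm) k = 0 := by
      simp only [Pi.sub_apply, Finset.sum_sub_distrib, hw, Function.comp_apply]
      rw [show (∑ k, w (σ.symm k)) = 0 from h2.trans hw]
      simp
    have hkey : elemA p q (w - w ∘ σ.symm) hvsum = a * nn * a⁻¹ * nn⁻¹ := by
      apply Subtype.ext
      push_cast
      exact (comm_base p q n w).symm
    refine ⟨w - w ∘ σ.symm, ?_, hvsum, by rw [hkey]; exact hmN⟩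
    intro h0
    have h3 := congrFun h0 (σ i)
    simp only [Pi.sub_apply, Function.comp_apply, Equiv.symm_apply_apply, Pi.zero_apply] at h3
    rw [hwdef] at h3
    simp [Pi.single_apply, hi, (Ne.symm hjσ), (Ne.symm hji)] at h3

lemma Abase_le {N : Subgroup (Gppq p q)} [Fact p.Prime] (hN : N.Normal)
    (hNbot : N ≠ ⊥) (hq3 : 3 ≤ q) (hqp : ¬ p ∣ q) : Abase p q ≤ N := by
  obtain ⟨v, hv0, hvW⟩ := exists_mem_Wgrp hN hNbot hq3
  obtain ⟨i, j, hij⟩ : ∃ i j, v i ≠ v j := by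
    by_contra h; push_neg at h
    apply hv0
    have hq0 : 0 < q := by omega
    set i0 : Fin q := ⟨0, hq0⟩
    obtain ⟨hsum, -⟩ := hvW
    have hmul : (q : ZMod p) * v i0 = 0 := by
      rw [Finset.sum_congr rfl (fun k _ => h k i0)] at hsum
      simpa [Finset.sum_const, nsmul_eq_mul] using hsum
    have hq0' : (q : ZMod p) ≠ 0 := by
      rw [Ne, ZMod.natCast_eq_zero_iff]
      exact hqp
    have hv00 : v i0 = 0 := by
      rcases mul_eq_zero.mp hmul with h1 | h1
      · exact absurd h1 hq0'
      · exact h1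
    funext k; rw [h k i0, hv00]; rfl
  have hij' : i ≠ j := fun h => hij (by rw [h])
  have h1 : v ∘ (Equiv.swap i j).symm - v ∈ Wgrp N :=
    AddSubgroup.sub_mem _ (Wgrp_perm hN _ hvW) hvW
  set c : ZMod p := v j - v i with hcdef
  have hc : c ≠ 0 := sub_ne_zero.mpr (Ne.symm hij)
  have heq : v ∘ (Equiv.swap i j).symm - v = c • (Pi.single i 1 - Pi.single j 1) := by
    funext k
    rcases eq_or_ne k i with rfl | hki
    · simp [Equiv.swap_apply_left, Pi.single_apply, hij', hcdef]
    rcases eq_or_ne k j with rfl | hkj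
    · simp [Equiv.swap_apply_right, Pi.single_apply, Ne.symm hij', hcdef]
    · simp [Equiv.swap_apply_of_ne_of_ne hki hkj, Pi.single_apply, hki, hkj]
  have hcij : c • (Pi.single i (1:ZMod p) - Pi.single j 1) ∈ Wgrp N := heq ▸ h1
  have hall : ∀ d : ZMod p, d • (Pi.single i (1:ZMod p) - Pi.single j 1) ∈ Wgrp N := by
    intro d
    have hsm := Wgrp_smul (d * c⁻¹) hcij
    rwa [smul_smul, mul_assoc, inv_mul_cancel₀ hc, mul_one] at hsm
  have hpair : ∀ (i' j' : Fin q) (d : ZMod p),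
      d • (Pi.single i' (1:ZMod p) - Pi.single j' 1) ∈ Wgrp N := by
    intro i' j' d
    rcases eq_or_ne i' j' with rfl | hne
    · simpa using (Wgrp N).zero_mem
    have ha0 : Equiv.swap i i' j ≠ i' := by
      intro h
      have h2 : Equiv.swap i i' j = Equiv.swap i i' i := by
        rw [h, Equiv.swap_apply_left]
      exact hij' ((Equiv.swap i i').injective h2).symm
    set σ := Equiv.swap (Equiv.swap i i' j) j' * Equiv.swap i i' with hσdef
    have hσi : σ i = i' := by
      rw [hσdef]
      simp only [Equiv.Perm.mul_apply, Equiv.swap_apply_left]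
      exact Equiv.swap_apply_of_ne_of_ne (Ne.symm ha0) hne
    have hσj : σ j = j' := by
      rw [hσdef]
      simp only [Equiv.Perm.mul_apply, Equiv.swap_apply_left]
    have hperm := Wgrp_perm hN σ (hall d)
    have hfun : (d • (Pi.single i 1 - Pi.single j 1 : Fin q → ZMod p)) ∘ σ.symm
        = d • (Pi.single i' 1 - Pi.single j' 1 : Fin q → ZMod p) := by
      funext k
      have e1 : (σ.symm k = i) ↔ (k = i') := by rw [Equiv.symm_apply_eq, hσi]
      have e2 : (σ.symm k = j) ↔ (k = j') := by rw [Equiv.symm_apply_eq, hσj]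
      simp only [Function.comp_apply, Pi.smul_apply, Pi.sub_apply, smul_eq_mul,
        Pi.single_apply, e1, e2]
    rwa [hfun] at hperm
  intro g hg
  have hgr : (g : Wreath p q).right = 1 := hg
  set v' : Fin q → ZMod p := fun k => toAdd ((g : Wreath p q).left k) with hv'def
  have hs : ∑ k, v' k = 0 := g.2
  have hrepr : v' = ∑ k, v' k • (Pi.single k (1:ZMod p) - Pi.single i 1) := by
    funext l
    rw [Finset.sum_apply]
    simp only [Pi.smul_apply, Pi.sub_apply, Pi.single_apply, smul_eq_mul, mul_sub]
    rw [Finset.sum_sub_distrib]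
    rw [show (∑ k, v' k * (if l = k then (1:ZMod p) else 0)) = v' l by
      simp [mul_ite, Finset.sum_ite_eq]]
    rw [show (∑ k, v' k * (if l = i then (1:ZMod p) else 0))
        = (∑ k, v' k) * (if l = i then (1:ZMod p) else 0) from (Finset.sum_mul _ _ _).symm]
    rw [hs]
    simp
  have hv'W : v' ∈ Wgrp N := by
    rw [hrepr]
    exact AddSubgroup.sum_mem _ (fun k _ => hpair k i (v' k))
  obtain ⟨hs2, hmem⟩ := hv'W
  have hfin : elemA p q v' hs2 = g := by
    apply Subtype.ext
    show mkW p q v' = (g : Wreath p q)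
    ext k
    · simp [mkW, hv'def]
    · simp [mkW, hgr]
  rwa [hfin] at hmem

end Gaux

theorem stmt6 (p q : ℕ) (hp : p.Prime) (hq : q.Prime) (hop : Odd p)
    (hoq : Odd q) (hlt : q < p) :
    (Abase p q).Normal ∧ Abase p q ≠ ⊥ ∧
      ∀ N : Subgroup (Gppq p q), N.Normal → N ≠ ⊥ → Abase p q ≤ N := by
  haveI : Fact p.Prime := ⟨hp⟩
  have hq2 := hq.two_le
  have hqodd := Nat.odd_iff.mp hoq
  have hq3 : 3 ≤ q := by omega
  have hqp : ¬ p ∣ q := fun h => absurd (Nat.le_of_dvd (by omega) h) (not_le.mpr hlt)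
  have hmemA : ∀ x : Gppq p q, x ∈ Abase p q ↔ (x : Wreath p q).right = 1 :=
    fun x => Iff.rfl
  refine ⟨⟨?_⟩, ?_, fun N hN hb => Gaux.Abase_le hN hb hq3 hqp⟩
  · intro n hn g
    have hn' : (n : Wreath p q).right = 1 := hn
    rw [hmemA]
    push_cast
    simp [SemidirectProduct.mul_right, SemidirectProduct.inv_right, hn']
  · intro hbot
    set i0 : Fin q := ⟨0, by omega⟩ with hi0
    set i1 : Fin q := ⟨1, by omega⟩ with hi1
    have hne : i0 ≠ i1 := fun h => by simpa [hi0, hi1] using congrArg Fin.val h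
    set g0 := Gaux.elemA p q (Pi.single i0 1 - Pi.single i1 1)
      (Gaux.sum_single_sub i0 i1) with hg0
    have hmem : g0 ∈ Abase p q := by rw [hmemA]; rfl
    rw [hbot, Subgroup.mem_bot] at hmem
    have h2 := congrArg (fun x : Gppq p q => Multiplicative.toAdd ((x : Wreath p q).left i0)) hmem
    simp [hg0, Gaux.elemA, Gaux.mkW, Pi.single_apply, hne] at h2
end

section
/- Let p and q be distinct odd primes, let ζ be a primitive q-th root of unity in an extension of 𝔽_p, and consider the vector f̃ = (ζ^{q−1}, ζ^{q−2}, ..., ζ, 1). If a permutation σ ∈ Sym(q) acting by permuting coordinates maps f̃ to a scalar multiple of itself, then σ is a power of the q-cycle (1 2 ... q). -/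
open Equiv Multiplicative Polynomial
open Fin.NatCast

lemma finRotate_pow_apply (n k : ℕ) (i : Fin (n + 1)) :
    ((finRotate (n + 1)) ^ k) i = i + (k : Fin (n + 1)) := by
  induction k with
  | zero => simp
  | succ k ih =>
    rw [pow_succ', Equiv.Perm.mul_apply, ih, finRotate_succ_apply]
    push_cast
    simp only [Nat.cast_succ, add_assoc]

theorem stmt7 (p q : ℕ) (hp : p.Prime) (hq : q.Prime) (hop : Odd p)
    (hoq : Odd q) (hpq : p ≠ q) (K : Type) [Field K] [Algebra (ZMod p) K]
    (ζ : K) (hζ : orderOf ζ = q) (σ : Equiv.Perm (Fin q)) (c : K)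
    (hσ : ∀ i : Fin q, ζ ^ (q - 1 - ((σ.symm i : Fin q) : ℕ)) =
      c * ζ ^ (q - 1 - (i : ℕ))) :
    σ ∈ Subgroup.zpowers (finRotate q) := by
  obtain ⟨n, rfl⟩ : ∃ n, q = n + 1 := ⟨q - 1, (Nat.succ_pred_eq_of_pos hq.pos).symm⟩
  have hζ0 : ζ ≠ 0 := by
    intro h
    have h1 : ζ ^ (n + 1) = 1 := hζ ▸ pow_orderOf_eq_one ζ
    rw [h, zero_pow (Nat.succ_ne_zero n)] at h1
    exact zero_ne_one h1
  set u : Kˣ := Units.mk0 ζ hζ0 with hu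
  have hord : orderOf u = n + 1 := by
    rw [hu, ← orderOf_units, Units.val_mk0]
    exact hζ
  set a₀ : ℕ := ((σ.symm ⟨n, Nat.lt_succ_self n⟩ : Fin (n + 1)) : ℕ) with ha₀
  set k : ℕ := n - a₀ with hk
  have hc : c = ζ ^ k := by
    have := hσ ⟨n, Nat.lt_succ_self n⟩
    simpa [← ha₀, ← hk] using this.symm
  refine ⟨(k : ℤ), ?_⟩
  show (finRotate (n + 1)) ^ (k : ℤ) = σ
  rw [zpow_natCast]
  ext i
  set a : ℕ := ((σ i : Fin (n + 1)) : ℕ) with ha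
  set b : ℕ := (i : ℕ) with hb
  have hale : a ≤ n := Nat.lt_succ_iff.mp (σ i).isLt
  have hble : b ≤ n := Nat.lt_succ_iff.mp i.isLt
  have hrel := hσ (σ i)
  rw [Equiv.symm_apply_apply, hc, ← pow_add] at hrel
  have hrelu : u ^ (n - b) = u ^ (k + (n - a)) := by
    ext
    simpa [← ha, ← hb, hu] using hrel
  have hmod : n - b ≡ k + (n - a) [MOD n + 1] := by
    have := (pow_eq_pow_iff_modEq).mp hrelu
    rwa [hord] at this
  have hzmod : (a : ZMod (n + 1)) = (b : ZMod (n + 1)) + k := by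
    have := (ZMod.natCast_eq_natCast_iff _ _ _).mpr hmod
    push_cast [Nat.cast_sub hale, Nat.cast_sub hble] at this
    linear_combination this
  have haval : a = (b + k) % (n + 1) := by
    have := (ZMod.natCast_eq_natCast_iff a (b + k) (n + 1)).mp (by push_cast; rw [hzmod])
    rw [Nat.ModEq, Nat.mod_eq_of_lt (by omega)] at this
    exact this
  rw [finRotate_pow_apply]
  show ((i + (k : Fin (n + 1))) : Fin (n + 1)).1 = a
  rw [Fin.val_add, Fin.val_natCast, ← hb, haval, Nat.add_mod b k,
    Nat.mod_eq_of_lt (show b < n + 1 by omega)]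
end

section
/- Let p be an odd prime with p ≡ 1 (mod 3). Then the minimal faithful permutation degree of G(p,p,3) ≅ (C_p × C_p) ⋊ Sym(3) equals 2p. -/
open Equiv Multiplicative Polynomial

/-- Minimal faithful permutation degree. -/
noncomputable def minDeg (G : Type*) [Group G] : ℕ :=
  sInf {n | ∃ f : G →* Equiv.Perm (Fin n), Function.Injective f}

/-! ### Auxiliary material -/

lemma even3 : ∀ σ : Equiv.Perm (Fin 3), Equiv.Perm.sign σ = 1 →
  (σ 0 = 0 ∧ σ 1 = 1 ∧ σ 2 = 2 ∧ σ⁻¹ 0 = 0 ∧ σ⁻¹ 1 = 1 ∧ σ⁻¹ 2 = 2) ∨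
  (σ 0 = 1 ∧ σ 1 = 2 ∧ σ 2 = 0 ∧ σ⁻¹ 0 = 2 ∧ σ⁻¹ 1 = 0 ∧ σ⁻¹ 2 = 1) ∨
  (σ 0 = 2 ∧ σ 1 = 0 ∧ σ 2 = 1 ∧ σ⁻¹ 0 = 1 ∧ σ⁻¹ 1 = 2 ∧ σ⁻¹ 2 = 0) := by decide

lemma wreath_mul_left {p : ℕ} (a b : Wreath p 3) (i : Fin 3) :
    toAdd ((a * b).left i) = toAdd (a.left i) + toAdd (b.left (a.right⁻¹ i)) := by
  simp [wreathAct, permAut, Equiv.Perm.inv_def]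
  rfl

lemma wreath_inv_left {p : ℕ} (a : Wreath p 3) (i : Fin 3) :
    toAdd ((a⁻¹).left i) = - toAdd (a.left (a.right i)) := by
  simp [wreathAct, permAut, Equiv.Perm.inv_def]
  rfl

lemma mem_Gppq {p : ℕ} (g : Wreath p 3) :
    g ∈ Gppq p 3 ↔ ∑ i, toAdd (g.left i) = 0 := Iff.rfl

/-- The subgroup `L ⋊ A₃` of the wreath product, where `L` is the `ω`-eigenline. -/
def Kgrp (p : ℕ) (ω : ZMod p) (hω : ω ^ 3 = 1) : Subgroup (Wreath p 3) where
  carrier := {g | Equiv.Perm.sign g.right = 1 ∧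
    toAdd (g.left 0) = ω * toAdd (g.left 1) ∧ toAdd (g.left 1) = ω * toAdd (g.left 2)}
  one_mem' := by
    refine ⟨by simp, ?_, ?_⟩ <;> simp
  mul_mem' := by
    rintro a b ⟨has, ha1, ha2⟩ ⟨hbs, hb1, hb2⟩
    refine ⟨by simp [has, hbs], ?_, ?_⟩ <;>
    · rw [wreath_mul_left, wreath_mul_left]
      rcases even3 a.right has with ⟨_,_,_,h0,h1,h2⟩|⟨_,_,_,h0,h1,h2⟩|⟨_,_,_,h0,h1,h2⟩ <;>
        simp only [h0, h1, h2] <;> simp only [ha1, ha2, hb1, hb2] <;>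
        first
          | ring1
          | linear_combination (toAdd (b.left 2)) * hω
          | linear_combination (-(toAdd (b.left 2))) * hω
  inv_mem' := by
    rintro a ⟨has, ha1, ha2⟩
    refine ⟨by simp [has], ?_, ?_⟩ <;>
    · rw [wreath_inv_left, wreath_inv_left]
      rcases even3 a.right has with ⟨h0,h1,h2,_,_,_⟩|⟨h0,h1,h2,_,_,_⟩|⟨h0,h1,h2,_,_,_⟩ <;>
        simp only [h0, h1, h2] <;> simp only [ha1, ha2] <;>
        first
          | ring1
          | linear_combination (toAdd (a.left 2)) * hω
          | linear_combination (-(toAdd (a.left 2))) * hω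

lemma mem_Kgrp {p : ℕ} {ω : ZMod p} {hω : ω ^ 3 = 1} (g : Wreath p 3) :
    g ∈ Kgrp p ω hω ↔ (Equiv.Perm.sign g.right = 1 ∧
      toAdd (g.left 0) = ω * toAdd (g.left 1) ∧
      toAdd (g.left 1) = ω * toAdd (g.left 2)) := Iff.rfl

lemma Kgrp_le {p : ℕ} {ω : ZMod p} (hω : ω ^ 3 = 1)
    (hsum : ω ^ 2 + ω + 1 = 0) : Kgrp p ω hω ≤ Gppq p 3 := by
  rintro g ⟨-, h1, h2⟩
  rw [mem_Gppq, Fin.sum_univ_three]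
  linear_combination h1 + (1 + ω) * h2 + (toAdd (g.left 2)) * hsum

lemma conj_left {p : ℕ} (x g : Wreath p 3) (i : Fin 3) :
    toAdd ((x⁻¹ * g * x).left i) =
      - toAdd (x.left (x.right i)) + toAdd (g.left (x.right i)) +
        toAdd (x.left (g.right⁻¹ (x.right i))) := by
  rw [wreath_mul_left, wreath_mul_left, wreath_inv_left]
  simp [mul_inv_rev, Equiv.Perm.mul_apply]

/-- An explicit equivalence computing the cardinality of `G(p,p,3)`. -/
def GppqEquiv (p : ℕ) : (Gppq p 3) ≃ ZMod p × ZMod p × Equiv.Perm (Fin 3) where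
  toFun g := (toAdd (g.val.left 0), toAdd (g.val.left 1), g.val.right)
  invFun x := ⟨⟨![ofAdd x.1, ofAdd x.2.1, ofAdd (-x.1 - x.2.1)], x.2.2⟩, by
    rw [mem_Gppq, Fin.sum_univ_three]; simp⟩
  left_inv g := by
    have hsum0 : toAdd (g.val.left 0) + toAdd (g.val.left 1) + toAdd (g.val.left 2) = 0 := by
      have h := g.prop
      rw [mem_Gppq, Fin.sum_univ_three] at h
      exact h
    apply Subtype.ext
    refine SemidirectProduct.ext ?_ rfl
    funext i
    fin_cases i
    · simp
    · simp
    · show ofAdd (-toAdd (g.val.left 0) - toAdd (g.val.left 1)) = g.val.left 2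
      apply Multiplicative.toAdd.injective
      simp only [toAdd_ofAdd]
      linear_combination -hsum0
  right_inv x := by
    refine Prod.ext ?_ (Prod.ext ?_ rfl) <;> simp

/-- An explicit equivalence computing the cardinality of `Kgrp`. -/
def KgrpEquiv (p : ℕ) (ω : ZMod p) (hω : ω ^ 3 = 1) :
    (Kgrp p ω hω) ≃ ZMod p × {σ : Equiv.Perm (Fin 3) // Equiv.Perm.sign σ = 1} where
  toFun k := (toAdd (k.val.left 2), ⟨k.val.right, k.prop.1⟩)
  invFun x := ⟨⟨![ofAdd (ω * (ω * x.1)), ofAdd (ω * x.1), ofAdd x.1], x.2.1⟩, by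
    refine ⟨x.2.2, ?_, ?_⟩ <;> simp⟩
  left_inv k := by
    obtain ⟨hs, h1, h2⟩ := k.prop
    apply Subtype.ext
    refine SemidirectProduct.ext ?_ rfl
    funext i
    fin_cases i
    · show ofAdd (ω * (ω * toAdd (k.val.left 2))) = k.val.left 0
      apply Multiplicative.toAdd.injective
      simp only [toAdd_ofAdd]
      linear_combination -h1 - ω * h2
    · show ofAdd (ω * toAdd (k.val.left 2)) = k.val.left 1
      apply Multiplicative.toAdd.injective
      simp only [toAdd_ofAdd]
      linear_combination -h2
    · simp
  right_inv x := by
    refine Prod.ext ?_ (Subtype.ext rfl) <;> simp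

instance wreathFinite (p q : ℕ) [NeZero p] : Finite (Wreath p q) :=
  Finite.of_injective (fun g => (g.left, g.right))
    (fun a b h => SemidirectProduct.ext (congrArg Prod.fst h) (congrArg Prod.snd h))

/-- Conjugating permutations by an equivalence, as a monoid hom. -/
def permCongrHom {α β : Type*} (e : α ≃ β) : Equiv.Perm α →* Equiv.Perm β where
  toFun g := (e.symm.trans g).trans e
  map_one' := by ext x; simp
  map_mul' g h := by ext x; simp

lemma permCongrHom_injective {α β : Type*} (e : α ≃ β) :
    Function.Injective (_root_.permCongrHom e) := by
  intro g h hgh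
  ext x
  have := congrArg (fun f => e.symm (f (e x))) hgh
  simpa [_root_.permCongrHom] using this

lemma exists_omega (p : ℕ) [Fact p.Prime] (hmod : p % 3 = 1) :
    ∃ ω : ZMod p, ω ^ 3 = 1 ∧ ω ≠ 1 := by
  obtain ⟨g, hg⟩ := IsCyclic.exists_ofOrder_eq_natCard (α := (ZMod p)ˣ)
  have hcard : Nat.card (ZMod p)ˣ = p - 1 := by
    rw [Nat.card_eq_fintype_card, ZMod.card_units]
  have hp2 : 2 ≤ p := (Fact.out : p.Prime).two_le
  have hm : p - 1 = 3 * ((p - 1) / 3) := by omega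
  set m := (p - 1) / 3 with hmdef
  have hmpos : m ≠ 0 := by omega
  have hu : orderOf (g ^ m) = 3 := by
    rw [orderOf_pow, hg, hcard, hm]
    rw [Nat.gcd_eq_right (dvd_mul_left m 3), mul_comm]
    exact Nat.mul_div_cancel_left 3 (Nat.pos_of_ne_zero hmpos)
  refine ⟨((g ^ m : (ZMod p)ˣ) : ZMod p), ?_, ?_⟩
  · have h1 := pow_orderOf_eq_one (g ^ m)
    rw [hu] at h1
    rw [← Units.val_pow_eq_pow_val, h1, Units.val_one]
  · intro h
    have : (g ^ m) = 1 := Units.ext h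
    rw [this, orderOf_one] at hu
    omega

theorem stmt9 (p : ℕ) (hp : p.Prime) (hop : Odd p) (hmod : p % 3 = 1) :
    minDeg (Gppq p 3) = 2 * p := by
  haveI : Fact p.Prime := ⟨hp⟩
  haveI : NeZero p := ⟨hp.pos.ne'⟩
  -- basic facts about ω
  obtain ⟨ω, hω, hω1⟩ := exists_omega p hmod
  have hsum : ω ^ 2 + ω + 1 = 0 := by
    have h0 : (ω - 1) * (ω ^ 2 + ω + 1) = 0 := by linear_combination hω
    rcases mul_eq_zero.mp h0 with h | h
    · exact absurd (sub_eq_zero.mp h) hω1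
    · exact h
  have hω0 : ω ≠ 0 := by
    intro h; rw [h] at hω; simp at hω
  have hω2 : ω ^ 2 ≠ 1 := by
    intro h
    have h3 : ω ^ 3 = ω := by rw [pow_succ, h, one_mul]
    exact hω1 (h3.symm.trans hω)
  have h3 : (3 : ZMod p) ≠ 0 := by
    intro h
    have h' : ((3 : ℕ) : ZMod p) = 0 := by exact_mod_cast h
    rw [ZMod.natCast_eq_zero_iff] at h'
    have := (Nat.prime_dvd_prime_iff_eq hp Nat.prime_three).mp h'
    omega
  -- the subgroups
  set K := (Kgrp p ω hω).subgroupOf (Gppq p 3) with hK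
  -- cardinalities
  have hcardG : Nat.card (Gppq p 3) = p * (p * 6) := by
    rw [Nat.card_congr (GppqEquiv p), Nat.card_prod, Nat.card_prod, Nat.card_zmod]
    congr 1
    congr 1
    rw [Nat.card_eq_fintype_card]; decide
  have hcardK : Nat.card K = p * 3 := by
    rw [Nat.card_congr (Subgroup.subgroupOfEquivOfLe (Kgrp_le hω hsum)).toEquiv,
      Nat.card_congr (KgrpEquiv p ω hω), Nat.card_prod, Nat.card_zmod]
    congr 1
    rw [Nat.card_eq_fintype_card]; decide
  have hQ : Nat.card ((Gppq p 3) ⧸ K) = 2 * p := by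
    have h := Subgroup.card_eq_card_quotient_mul_card_subgroup K
    rw [hcardG, hcardK] at h
    have h6 : Nat.card ((Gppq p 3) ⧸ K) * (p * 3) = (2 * p) * (p * 3) := by
      rw [← h]; ring
    exact Nat.eq_of_mul_eq_mul_right (Nat.mul_pos hp.pos (by norm_num)) h6
  -- faithfulness of the coset action
  have hact : Function.Injective (MulAction.toPermHom (Gppq p 3) ((Gppq p 3) ⧸ K)) := by
    rw [injective_iff_map_eq_one]
    intro g hg
    have hmem : ∀ x : (Gppq p 3),
        ((x : Wreath p 3))⁻¹ * (g : Wreath p 3) * (x : Wreath p 3) ∈ Kgrp p ω hω := by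
      intro x
      have h1 : ((g * x : Gppq p 3) : (Gppq p 3) ⧸ K) = (x : (Gppq p 3) ⧸ K) := by
        have := congrArg (fun e : Equiv.Perm ((Gppq p 3) ⧸ K) => e (x : (Gppq p 3) ⧸ K)) hg
        simpa [MulAction.Quotient.smul_coe] using this
      have h2 : (g * x)⁻¹ * x ∈ K := QuotientGroup.eq.mp h1
      have h3 := K.inv_mem h2
      have h4 : x⁻¹ * g * x ∈ K := by
        have : ((g * x)⁻¹ * x)⁻¹ = x⁻¹ * g * x := by group
        rwa [this] at h3
      rw [hK, Subgroup.mem_subgroupOf] at h4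
      simpa using h4
    -- step 1: x = 1
    have hg1 := hmem 1
    simp only [OneMemClass.coe_one, inv_one, one_mul, mul_one] at hg1
    obtain ⟨hs, hv01, hv12⟩ := hg1
    -- step 2: conjugate by the transposition
    have htmem : (⟨1, Equiv.swap 0 1⟩ : Wreath p 3) ∈ Gppq p 3 := by
      rw [mem_Gppq]; simp
    set xt : (Gppq p 3) := ⟨⟨1, Equiv.swap 0 1⟩, htmem⟩ with hxt
    have hgt := hmem xt
    have ht0 : Equiv.swap (0 : Fin 3) 1 0 = 1 := by decide
    have ht1 : Equiv.swap (0 : Fin 3) 1 1 = 0 := by decide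
    have ht2 : Equiv.swap (0 : Fin 3) 1 2 = 2 := by decide
    obtain ⟨-, hA, hB⟩ := hgt
    rw [conj_left, conj_left] at hA hB
    simp only [hxt, ht0, ht1, ht2, Pi.one_apply, toAdd_one, neg_zero, zero_add, add_zero] at hA hB
    -- deduce that the base part of g is trivial
    have hv1 : toAdd ((g : Wreath p 3).left 1) = 0 := by
      have h0 : (1 - ω ^ 2) * toAdd ((g : Wreath p 3).left 1) = 0 := by
        linear_combination hA + ω * hv01
      rcases mul_eq_zero.mp h0 with h | h
      · exact absurd (by linear_combination -h) hω2
      · exact h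
    have hv0 : toAdd ((g : Wreath p 3).left 0) = 0 := by rw [hv01, hv1, mul_zero]
    have hv2 : toAdd ((g : Wreath p 3).left 2) = 0 := by
      have := hv12; rw [hv1] at this
      rcases mul_eq_zero.mp this.symm with h | h
      · exact absurd h hω0
      · exact h
    -- step 3: conjugate by a translation
    have hwmem : (⟨![ofAdd (1 : ZMod p), ofAdd (-1 : ZMod p), ofAdd (0 : ZMod p)], 1⟩ :
        Wreath p 3) ∈ Gppq p 3 := by
      rw [mem_Gppq, Fin.sum_univ_three]; simp
    set xw : (Gppq p 3) := ⟨⟨![ofAdd 1, ofAdd (-1), ofAdd 0], 1⟩, hwmem⟩ with hxw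
    have hgw := hmem xw
    obtain ⟨-, hC, hD⟩ := hgw
    rw [conj_left, conj_left] at hC hD
    simp only [hxw, Equiv.Perm.one_apply, hv0, hv1, hv2, add_zero, zero_add] at hC hD
    -- case analysis on the permutation part
    rcases even3 _ hs with ⟨e0,e1,e2,f0,f1,f2⟩ | ⟨e0,e1,e2,f0,f1,f2⟩ | ⟨e0,e1,e2,f0,f1,f2⟩
    · -- g = 1
      apply Subtype.ext
      refine SemidirectProduct.ext ?_ ?_
      · funext i
        fin_cases i
        · apply Multiplicative.toAdd.injective; simpa using hv0
        · apply Multiplicative.toAdd.injective; simpa using hv1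
        · apply Multiplicative.toAdd.injective; simpa using hv2
      · show (g : Wreath p 3).right = 1
        exact Equiv.ext fun i => by fin_cases i <;> simp [e0, e1, e2]
    · -- contradiction : 3 = 0
      exfalso
      rw [f0, f1] at hC
      rw [f1, f2] at hD
      simp only [Matrix.cons_val_zero, Matrix.cons_val_one, Matrix.head_cons,
        Matrix.cons_val_two, Matrix.tail_cons, toAdd_ofAdd] at hC hD
      apply h3
      linear_combination hC + 2 * hD
    · exfalso
      rw [f0, f1] at hC
      rw [f1, f2] at hD
      simp only [Matrix.cons_val_zero, Matrix.cons_val_one, Matrix.head_cons,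
        Matrix.cons_val_two, Matrix.tail_cons, toAdd_ofAdd] at hC hD
      apply h3
      linear_combination hD - hC
  -- assemble the faithful degree-2p permutation representation
  haveI : Fintype ((Gppq p 3) ⧸ K) := Fintype.ofFinite _
  have hcards : Fintype.card ((Gppq p 3) ⧸ K) = 2 * p := by
    rw [← Nat.card_eq_fintype_card, hQ]
  let e : ((Gppq p 3) ⧸ K) ≃ Fin (2 * p) := Fintype.equivFinOfCardEq hcards
  have hmemS : (2 * p) ∈ {n | ∃ f : (Gppq p 3) →* Equiv.Perm (Fin n), Function.Injective f} := by
    exact ⟨(_root_.permCongrHom e).comp (MulAction.toPermHom (Gppq p 3) ((Gppq p 3) ⧸ K)),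
      (permCongrHom_injective e).comp hact⟩
  -- lower bound
  have hlb : ∀ n ∈ {n | ∃ f : (Gppq p 3) →* Equiv.Perm (Fin n), Function.Injective f},
      2 * p ≤ n := by
    rintro n ⟨f, hf⟩
    have hdvd : Nat.card (Gppq p 3) ∣ Nat.card (Equiv.Perm (Fin n)) := by
      have h1 : Nat.card (Gppq p 3) = Nat.card f.range :=
        Nat.card_congr (MonoidHom.ofInjective hf).toEquiv
      rw [h1]
      exact Subgroup.card_subgroup_dvd_card f.range
    rw [hcardG, Nat.card_eq_fintype_card, Fintype.card_perm, Fintype.card_fin] at hdvd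
    have hp2 : p ^ 2 ∣ Nat.factorial n := dvd_trans ⟨6, by ring⟩ hdvd
    by_contra hlt
    push_neg at hlt
    have hn0 : n ≠ 0 := by
      rintro rfl
      simp only [Nat.factorial_zero, Nat.dvd_one] at hp2
      nlinarith [hp.two_le]
    have hlog : Nat.log p n < 2 := by
      apply Nat.log_lt_of_lt_pow hn0
      nlinarith [hp.two_le]
    have h2 := (Nat.Prime.pow_dvd_factorial_iff hp hlog).mp hp2
    rw [show Finset.Ico 1 2 = {1} from rfl, Finset.sum_singleton, pow_one] at h2
    have := (Nat.le_div_iff_mul_le hp.pos).mp h2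
    omega
  exact le_antisymm (Nat.sInf_le hmemS) (le_csInf ⟨2 * p, hmemS⟩ hlb)
end

section
/- Let p be an odd prime with p ≡ 1 (mod 3), let ζ be a primitive cube root of unity in 𝔽_p, and let G = (C_p × C_p) ⋊ Sym(3) where Sym(3) acts on the standard 2-dimensional sum-zero module. Then the subgroup L generated by the element (1, −ζ) of the base group together with the 3-cycle b = (1 2 3) is core-free in G of order 3p. -/
open Equiv Multiplicative Polynomial

namespace Stmt10Aux

open Equiv Multiplicative SemidirectProduct Subgroup

variable {p : ℕ}

def fm (ζ m : ZMod p) : Fin 3 → Multiplicative (ZMod p) :=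
  fun i => Multiplicative.ofAdd (m * ![1, -1-ζ, ζ] i)

lemma fm_mul (ζ m m' : ZMod p) : fm ζ m * fm ζ m' = fm ζ (m + m') := by
  funext i; simp [fm, ← ofAdd_add, add_mul]

lemma fm_inv (ζ m : ZMod p) : (fm ζ m)⁻¹ = fm ζ (-m) := by
  funext i; simp [fm, ← ofAdd_neg]

lemma act_apply (σ : Equiv.Perm (Fin 3)) (v : Fin 3 → Multiplicative (ZMod p)) (i : Fin 3) :
    wreathAct p 3 σ v i = v (σ.symm i) := rfl

lemma act_rot (ζ : ZMod p) (hζ2 : ζ^2 + ζ + 1 = 0) (m : ZMod p) :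
    wreathAct p 3 (finRotate 3) (fm ζ m) = fm ζ (ζ * m) := by
  have h0 : (finRotate 3).symm 0 = 2 := by decide
  have h1 : (finRotate 3).symm 1 = 0 := by decide
  have h2 : (finRotate 3).symm 2 = 1 := by decide
  funext i
  fin_cases i
  · rw [act_apply]; show fm ζ m ((finRotate 3).symm 0) = _
    rw [h0]; show ofAdd (m * ζ) = ofAdd (ζ * m * 1)
    congr 1; ring
  · rw [act_apply]; show fm ζ m ((finRotate 3).symm 1) = _
    rw [h1]; show ofAdd (m * 1) = ofAdd (ζ * m * (-1-ζ))
    congr 1; linear_combination m * hζ2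
  · rw [act_apply]; show fm ζ m ((finRotate 3).symm 2) = _
    rw [h2]; show ofAdd (m * (-1-ζ)) = ofAdd (ζ * m * ζ)
    congr 1; linear_combination (-m) * hζ2

lemma act_rot_pow (ζ : ZMod p) (hζ2 : ζ^2 + ζ + 1 = 0) (n : ℕ) (m : ZMod p) :
    wreathAct p 3 ((finRotate 3)^n) (fm ζ m) = fm ζ (ζ^n * m) := by
  induction n generalizing m with
  | zero => simp
  | succ n ih =>
      rw [pow_succ, map_mul]
      show wreathAct p 3 ((finRotate 3)^n) (wreathAct p 3 (finRotate 3) (fm ζ m)) = _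
      rw [act_rot ζ hζ2, ih, pow_succ]
      ring_nf

lemma rot3 : (finRotate 3)^3 = 1 := by decide

lemma rot_inv (n : ℕ) : ((finRotate 3)^n)⁻¹ = (finRotate 3)^(2*n) := by
  symm
  apply eq_inv_of_mul_eq_one_right
  rw [← pow_add]
  have h : n + 2*n = 3*n := by ring
  rw [h, pow_mul, rot3, one_pow]

def Sgrp (ζ : ZMod p) (hζ2 : ζ^2+ζ+1 = 0) : Subgroup (Wreath p 3) where
  carrier := {g | ∃ (k : ZMod p) (n : ℕ), g = ⟨fm ζ k, (finRotate 3)^n⟩}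
  one_mem' := ⟨0, 0, by
    refine SemidirectProduct.ext ?_ (by simp)
    funext i; simp [fm]⟩
  mul_mem' := by
    rintro a b ⟨k, n, rfl⟩ ⟨k', n', rfl⟩
    refine ⟨k + ζ^n * k', n + n', SemidirectProduct.ext ?_ ?_⟩
    · show fm ζ k * wreathAct p 3 ((finRotate 3)^n) (fm ζ k') = fm ζ (k + ζ^n * k')
      rw [act_rot_pow ζ hζ2, fm_mul]
    · show (finRotate 3)^n * (finRotate 3)^n' = (finRotate 3)^(n + n')
      rw [pow_add]
  inv_mem' := by
    rintro a ⟨k, n, rfl⟩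
    refine ⟨ζ^(2*n) * (-k), 2*n, SemidirectProduct.ext ?_ ?_⟩
    · show wreathAct p 3 (((finRotate 3)^n)⁻¹) (fm ζ k)⁻¹ = fm ζ (ζ^(2*n) * (-k))
      rw [rot_inv, fm_inv, act_rot_pow ζ hζ2]
    · show ((finRotate 3)^n)⁻¹ = (finRotate 3)^(2*n)
      rw [rot_inv]

variable [NeZero p]

lemma fm_pow (ζ : ZMod p) (m : ℕ) : (fm ζ 1)^m = fm ζ (m : ZMod p) := by
  funext i
  show (ofAdd (1 * _))^m = ofAdd ((m : ZMod p) * _)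
  rw [← ofAdd_nsmul]
  congr 1
  simp [nsmul_eq_mul]

lemma closure_eq (ζ : ZMod p) (hζ2 : ζ^2 + ζ + 1 = 0) :
    Subgroup.closure {SemidirectProduct.inl (fm ζ 1), SemidirectProduct.inr (finRotate 3)}
      = Sgrp ζ hζ2 := by
  apply le_antisymm
  · rw [Subgroup.closure_le]
    rintro g (rfl | rfl)
    · exact ⟨1, 0, SemidirectProduct.ext rfl (by simp)⟩
    · exact ⟨0, 1, SemidirectProduct.ext (by funext i; simp [fm]) (by simp)⟩
  · rintro g ⟨k, n, rfl⟩
    rw [mk_eq_inl_mul_inr]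
    apply mul_mem
    · have h : fm ζ k = (fm ζ 1)^(k.val) := by rw [fm_pow, ZMod.natCast_val, ZMod.cast_id]
      rw [h, map_pow]
      refine pow_mem (Subgroup.subset_closure ?_) _
      exact Set.mem_insert _ _
    · rw [map_pow]
      refine pow_mem (Subgroup.subset_closure ?_) _
      exact Set.mem_insert_of_mem _ (Set.mem_singleton _)

lemma rot_pow_inj : ∀ j j' : ZMod 3,
    (finRotate 3)^(j.val) = (finRotate 3)^(j'.val) → j = j' := by decide

lemma card_eq (ζ : ZMod p) (hζ2 : ζ^2 + ζ + 1 = 0) :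
    Nat.card (Sgrp ζ hζ2) = 3 * p := by
  have hf : Function.Bijective (fun kj : ZMod p × ZMod 3 =>
      (⟨⟨fm ζ kj.1, (finRotate 3)^(kj.2.val)⟩, ⟨kj.1, kj.2.val, rfl⟩⟩ : Sgrp ζ hζ2)) := by
    constructor
    · rintro ⟨k, j⟩ ⟨k', j'⟩ h
      rw [Subtype.ext_iff] at h
      have hl := congrArg SemidirectProduct.left h
      have hr := congrArg SemidirectProduct.right h
      simp only at hl hr
      have hk : k = k' := by
        have h0 := congrFun hl 0
        have h2 := Multiplicative.ofAdd.injective (a₁ := k * 1) (a₂ := k' * 1) h0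
        simpa using h2
      have hj : j = j' := rot_pow_inj j j' hr
      simp [hk, hj]
    · rintro ⟨g, k, n, rfl⟩
      refine ⟨⟨k, (n : ZMod 3)⟩, ?_⟩
      apply Subtype.ext
      show (⟨fm ζ k, (finRotate 3)^(((n : ZMod 3)).val)⟩ : Wreath p 3) = _
      refine SemidirectProduct.ext rfl ?_
      show (finRotate 3)^(((n : ZMod 3)).val) = (finRotate 3)^n
      rw [ZMod.val_natCast, ← pow_eq_pow_mod n rot3]
  rw [← Nat.card_eq_of_bijective _ hf, Nat.card_prod, Nat.card_zmod, Nat.card_zmod, mul_comm]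

lemma conj_inl_left (u w : Fin 3 → Multiplicative (ZMod p)) (σ : Equiv.Perm (Fin 3)) (i : Fin 3) :
    (inl u * (⟨w, σ⟩ : Wreath p 3) * (inl u)⁻¹).left i = u i * w i * (u (σ.symm i))⁻¹ := rfl

lemma conj_inr_left (σ : Equiv.Perm (Fin 3)) (w : Fin 3 → Multiplicative (ZMod p))
    (τ : Equiv.Perm (Fin 3)) (i : Fin 3) :
    (inr σ * (⟨w, τ⟩ : Wreath p 3) * (inr σ)⁻¹).left i = w (σ.symm i) := by
  show (1 : Multiplicative (ZMod p)) * w (σ.symm i) * _ = _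
  simp

lemma le_Gppq (ζ : ZMod p) (hζ2 : ζ^2 + ζ + 1 = 0) : Sgrp ζ hζ2 ≤ Gppq p 3 := by
  rintro g ⟨k, n, rfl⟩
  show ∑ i, toAdd ((fm ζ k) i) = 0
  rw [Fin.sum_univ_three]
  simp only [fm, toAdd_ofAdd]
  show k * 1 + k * (-1-ζ) + k * ζ = 0
  ring

lemma core_bot [hf : Fact p.Prime] (hmod : p % 3 = 1) (ζ : ZMod p)
    (hζ1 : ζ ≠ 1) (hζ2 : ζ^2 + ζ + 1 = 0) :
    Subgroup.normalCore ((Sgrp ζ hζ2).comap (Gppq p 3).subtype) = ⊥ := by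
  have h3 : (3 : ZMod p) ≠ 0 := by
    intro h
    have hd : p ∣ 3 := (ZMod.natCast_eq_zero_iff 3 p).mp (by exact_mod_cast h)
    have h' := (Nat.prime_dvd_prime_iff_eq hf.out (by norm_num)).mp hd
    rw [h'] at hmod; norm_num at hmod
  have hζ0 : ζ ≠ 0 := by
    intro h; rw [h] at hζ2; simp at hζ2
  rw [Subgroup.eq_bot_iff_forall]
  intro x hx
  have hconj : ∀ b : Gppq p 3, ((b * x * b⁻¹ : Gppq p 3) : Wreath p 3) ∈ Sgrp ζ hζ2 :=
    fun b => Subgroup.mem_comap.mp (hx b)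
  obtain ⟨k, n, hxv⟩ : (x : Wreath p 3) ∈ Sgrp ζ hζ2 := by
    have h1 := hconj 1
    simpa using h1
  have hxv' : (x : Wreath p 3) = ⟨fm ζ k, (finRotate 3)^(n % 3)⟩ := by
    rw [hxv]
    exact SemidirectProduct.ext rfl (pow_eq_pow_mod n rot3)
  set uu : Fin 3 → Multiplicative (ZMod p) :=
    fun i => Multiplicative.ofAdd (![1, -1, 0] i) with huu
  have hummem : (inl uu : Wreath p 3) ∈ Gppq p 3 := by
    show ∑ i, toAdd (uu i) = 0
    rw [Fin.sum_univ_three]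
    simp [uu]
  have key := hconj ⟨inl uu, hummem⟩
  have hcast : ((⟨inl uu, hummem⟩ * x * (⟨inl uu, hummem⟩)⁻¹ : Gppq p 3) : Wreath p 3) =
      inl uu * (⟨fm ζ k, (finRotate 3)^(n % 3)⟩ : Wreath p 3) * (inl uu)⁻¹ := by
    push_cast
    rw [hxv']
  rw [hcast] at key
  have hn3 : n % 3 = 0 ∨ n % 3 = 1 ∨ n % 3 = 2 := by omega
  rcases hn3 with h0 | h1 | h2
  · -- rotation part trivial; conjugate by inr (swap 0 1)
    rw [h0, pow_zero] at hxv'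
    clear key hcast
    set s : Equiv.Perm (Fin 3) := Equiv.swap 0 1 with hs
    have hsmem : (inr s : Wreath p 3) ∈ Gppq p 3 := by
      show ∑ i, toAdd ((1 : Fin 3 → Multiplicative (ZMod p)) i) = 0
      simp
    have key := hconj ⟨inr s, hsmem⟩
    have hcast : ((⟨inr s, hsmem⟩ * x * (⟨inr s, hsmem⟩)⁻¹ : Gppq p 3) : Wreath p 3) =
        inr s * (⟨fm ζ k, 1⟩ : Wreath p 3) * (inr s)⁻¹ := by
      push_cast
      rw [hxv']
    rw [hcast] at key
    obtain ⟨k', n', he⟩ := key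
    have el := congrArg SemidirectProduct.left he
    have e0 : fm ζ k (s.symm 0) = fm ζ k' 0 := by
      rw [← conj_inr_left s (fm ζ k) 1 0, el]
    have e2 : fm ζ k (s.symm 2) = fm ζ k' 2 := by
      rw [← conj_inr_left s (fm ζ k) 1 2, el]
    have hs0 : s.symm 0 = 1 := by decide
    have hs2 : s.symm 2 = 2 := by decide
    rw [hs0] at e0; rw [hs2] at e2
    have a0 : k * (-1 - ζ) = k' * 1 := by
      have h' := congrArg toAdd e0; simpa [fm] using h'
    have a2 : k * ζ = k' * ζ := by
      have h' := congrArg toAdd e2; simpa [fm] using h'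
    have hkk : k = k' := by
      have h' : (k - k') * ζ = 0 := by linear_combination a2
      rcases mul_eq_zero.mp h' with h | h
      · exact sub_eq_zero.mp h
      · exact absurd h hζ0
    rw [← hkk] at a0
    have hk2 : k * (2 + ζ) = 0 := by linear_combination -a0
    have hk0 : k = 0 := by
      rcases mul_eq_zero.mp hk2 with h | h
      · exact h
      · exact absurd (by linear_combination hζ2 - (ζ - 1) * h) h3
    apply Subtype.ext
    rw [hxv', hk0]
    refine SemidirectProduct.ext ?_ rfl
    funext i; simp [fm]
  · exfalso
    rw [h1, pow_one] at key
    obtain ⟨k', n', he⟩ := key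
    have el := congrArg SemidirectProduct.left he
    have e0 : uu 0 * fm ζ k 0 * (uu ((finRotate 3).symm 0))⁻¹ = fm ζ k' 0 := by
      rw [← conj_inl_left uu (fm ζ k) (finRotate 3) 0, el]
    have e2 : uu 2 * fm ζ k 2 * (uu ((finRotate 3).symm 2))⁻¹ = fm ζ k' 2 := by
      rw [← conj_inl_left uu (fm ζ k) (finRotate 3) 2, el]
    have hr0 : (finRotate 3).symm 0 = 2 := by decide
    have hr2 : (finRotate 3).symm 2 = 1 := by decide
    rw [hr0] at e0; rw [hr2] at e2
    have a0 : (1 : ZMod p) + k * 1 - 0 = k' * 1 := by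
      have h' := congrArg toAdd e0; simp [fm, uu] at h'; linear_combination h'
    have a2 : (0 : ZMod p) + k * ζ - (-1) = k' * ζ := by
      have h' := congrArg toAdd e2; simp [fm, uu] at h'; linear_combination h'
    exact hζ1 (by linear_combination ζ * a0 - a2)
  · exfalso
    rw [h2] at key
    obtain ⟨k', n', he⟩ := key
    have el := congrArg SemidirectProduct.left he
    have e0 : uu 0 * fm ζ k 0 * (uu (((finRotate 3)^2).symm 0))⁻¹ = fm ζ k' 0 := by
      rw [← conj_inl_left uu (fm ζ k) ((finRotate 3)^2) 0, el]
    have e2 : uu 2 * fm ζ k 2 * (uu (((finRotate 3)^2).symm 2))⁻¹ = fm ζ k' 2 := by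
      rw [← conj_inl_left uu (fm ζ k) ((finRotate 3)^2) 2, el]
    have hr0 : ((finRotate 3)^2).symm 0 = 1 := by decide
    have hr2 : ((finRotate 3)^2).symm 2 = 0 := by decide
    rw [hr0] at e0; rw [hr2] at e2
    have a0 : (1 : ZMod p) + k * 1 - (-1) = k' * 1 := by
      have h' := congrArg toAdd e0; simp [fm, uu] at h'; linear_combination h'
    have a2 : (0 : ZMod p) + k * ζ - 1 = k' * ζ := by
      have h' := congrArg toAdd e2; simp [fm, uu] at h'; linear_combination h'
    have hz : 2 * ζ + 1 = 0 := by linear_combination ζ * a0 - a2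
    exact h3 (by linear_combination 4 * hζ2 - (2 * ζ - 1) * hz - 2 * hz)

end Stmt10Aux

theorem stmt10 (p : ℕ) (hp : p.Prime) (hop : Odd p) (hmod : p % 3 = 1)
    (ζ : ZMod p) (hζ : orderOf ζ = 3) :
    let v : Fin 3 → Multiplicative (ZMod p) :=
      ![Multiplicative.ofAdd 1, Multiplicative.ofAdd (-1 - ζ), Multiplicative.ofAdd ζ]
    let L : Subgroup (Wreath p 3) :=
      Subgroup.closure {SemidirectProduct.inl v, SemidirectProduct.inr (finRotate 3)}
    L ≤ Gppq p 3 ∧ Nat.card L = 3 * p ∧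
      Subgroup.normalCore (L.comap (Gppq p 3).subtype) = ⊥ := by
  intro v L
  haveI : Fact p.Prime := ⟨hp⟩
  haveI : NeZero p := ⟨hp.pos.ne'⟩
  have hζ3 : ζ ^ 3 = 1 := by rw [← hζ]; exact pow_orderOf_eq_one ζ
  have hζ1 : ζ ≠ 1 := by
    intro h; rw [h, orderOf_one] at hζ; norm_num at hζ
  have hζ2 : ζ ^ 2 + ζ + 1 = 0 := by
    have hfac : (ζ - 1) * (ζ ^ 2 + ζ + 1) = 0 := by linear_combination hζ3
    rcases mul_eq_zero.mp hfac with h | h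
    · exact absurd (sub_eq_zero.mp h) hζ1
    · exact h
  have hv : v = Stmt10Aux.fm ζ 1 := by
    funext i; fin_cases i <;> simp [v, Stmt10Aux.fm]
  have hL : L = Stmt10Aux.Sgrp ζ hζ2 := by
    show Subgroup.closure _ = _
    rw [hv]
    exact Stmt10Aux.closure_eq ζ hζ2
  refine ⟨?_, ?_, ?_⟩
  · rw [hL]; exact Stmt10Aux.le_Gppq ζ hζ2
  · rw [hL]; exact Stmt10Aux.card_eq ζ hζ2
  · rw [hL]; exact Stmt10Aux.core_bot hmod ζ hζ1 hζ2
end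

section
/- Let p < q be odd primes and H = A ⋊ ⟨b⟩ as above (|H| = p^{q−1}q). If K is a proper subgroup of H whose order is divisible by q, then either K is cyclic of order q, or K = core(K) ⋊ ⟨x⟩ for some element x of order q, where core(K) is the normal core of K in H and is the unique Sylow p-subgroup of K. -/
open Equiv Multiplicative Polynomial

/-- The subgroup `H = A ⋊ ⟨b⟩` of the wreath product, where `b` is the cyclic
shift `(1 2 … q)`. -/
def Hgrp (p q : ℕ) : Subgroup (Wreath p q) where
  carrier := {g | ∑ i, Multiplicative.toAdd (g.left i) = 0 ∧
    g.right ∈ Subgroup.zpowers (finRotate q)}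
  one_mem' := ⟨(Gppq p q).one_mem, Subgroup.one_mem _⟩
  mul_mem' := by
    intro a b ha hb
    exact ⟨(Gppq p q).mul_mem ha.1 hb.1, by
      simpa using Subgroup.mul_mem _ ha.2 hb.2⟩
  inv_mem' := by
    intro a ha
    exact ⟨(Gppq p q).inv_mem ha.1, by simpa using Subgroup.inv_mem _ ha.2⟩

section Aux

variable {p q : ℕ}

/-- Projection to the permutation part. -/
def phiH (p q : ℕ) : ↥(Hgrp p q) →* Equiv.Perm (Fin q) :=
  SemidirectProduct.rightHom.comp (Hgrp p q).subtype

lemma phiH_apply (g : ↥(Hgrp p q)) : phiH p q g = (g : Wreath p q).right := rfl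

lemma mem_ker_phiH (g : ↥(Hgrp p q)) :
    g ∈ (phiH p q).ker ↔ (g : Wreath p q).right = 1 := Iff.rfl

lemma mem_Hgrp (g : Wreath p q) :
    g ∈ Hgrp p q ↔ (∑ i, Multiplicative.toAdd (g.left i) = 0 ∧
      g.right ∈ Subgroup.zpowers (finRotate q)) := Iff.rfl

lemma finiteWreath (hp : p ≠ 0) : Finite (Wreath p q) := by
  haveI : NeZero p := ⟨hp⟩
  exact Finite.of_injective (fun g : Wreath p q => (g.left, g.right))
    (fun a b h => SemidirectProduct.ext (congrArg Prod.fst h) (congrArg Prod.snd h))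

lemma eq_inl_of_right_eq_one {g : Wreath p q} (hg : g.right = 1) :
    g = SemidirectProduct.inl g.left :=
  SemidirectProduct.ext rfl (by simpa using hg)

lemma base_pow_p (l : Fin q → Multiplicative (ZMod p)) : l ^ p = 1 := by
  funext i
  show l i ^ p = 1
  have : Multiplicative.toAdd (l i ^ p) = Multiplicative.toAdd (1 : Multiplicative (ZMod p)) := by
    simp [toAdd_pow, nsmul_eq_mul, ZMod.natCast_self]
  exact Multiplicative.toAdd.injective this

lemma pow_p_eq_one {g : Wreath p q} (hg : g.right = 1) : g ^ p = 1 := by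
  rw [eq_inl_of_right_eq_one hg, ← map_pow, base_pow_p, map_one]

lemma ker_comm {u v : Wreath p q} (hu : u.right = 1) (hv : v.right = 1) :
    u * v = v * u := by
  rw [eq_inl_of_right_eq_one hu, eq_inl_of_right_eq_one hv, ← map_mul, ← map_mul,
    mul_comm]

lemma conj_eq {g a : Wreath p q} (ha : a.right = 1) :
    g * a * g⁻¹ = SemidirectProduct.inl (wreathAct p q g.right a.left) := by
  refine SemidirectProduct.ext ?_ ?_
  · show (g * a * g⁻¹).left = _
    rw [SemidirectProduct.mul_left, SemidirectProduct.mul_left,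
      SemidirectProduct.mul_right, SemidirectProduct.inv_left, ha, mul_one]
    simp only [map_inv, MulAut.apply_inv_self]
    rw [mul_comm g.left, mul_assoc, mul_inv_cancel, mul_one, SemidirectProduct.left_inl]
  · simp [SemidirectProduct.mul_right, SemidirectProduct.inv_right, ha]

end Aux
section Aux2

variable {p q : ℕ}

lemma orderOf_finRotate_prime (hq : q.Prime) : orderOf (finRotate q) = q := by
  obtain ⟨k, rfl⟩ : ∃ k, q = k + 2 := ⟨q - 2, by have := hq.two_le; omega⟩
  rw [← Equiv.Perm.lcm_cycleType, cycleType_finRotate]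
  simp

lemma zpow_q_eq_one {σ : Equiv.Perm (Fin q)} (hq : q.Prime)
    (h : σ ∈ Subgroup.zpowers (finRotate q)) : σ ^ q = 1 := by
  have h1 : finRotate q ^ (q : ℤ) = 1 := by
    have h2 := pow_orderOf_eq_one (finRotate q)
    rw [orderOf_finRotate_prime hq] at h2
    rw [zpow_natCast, h2]
  obtain ⟨n, rfl⟩ := Subgroup.mem_zpowers_iff.mp h
  rw [← zpow_natCast, ← zpow_mul, mul_comm, zpow_mul, h1, one_zpow]

lemma zpowers_eq_of_ne_one (hq : q.Prime) {σ : Equiv.Perm (Fin q)}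
    (hmem : σ ∈ Subgroup.zpowers (finRotate q)) (hne : σ ≠ 1) :
    Subgroup.zpowers σ = Subgroup.zpowers (finRotate q) := by
  have hord : orderOf σ = q := by
    rcases hq.eq_one_or_self_of_dvd _ (orderOf_dvd_of_pow_eq_one (zpow_q_eq_one hq hmem)) with
      h | h
    · exact absurd (orderOf_eq_one_iff.mp h) hne
    · exact h
  apply Subgroup.eq_of_le_of_card_ge (Subgroup.zpowers_le.mpr hmem)
  rw [Nat.card_zpowers, Nat.card_zpowers, hord, orderOf_finRotate_prime hq]

open Fin.NatCast in
lemma invariant_const [NeZero q] (hq : q.Prime) {al : Fin q → Multiplicative (ZMod p)}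
    (h : ∀ i, al (finRotate q i) = al i) : ∀ i, al i = al 0 := by
  obtain ⟨k, rfl⟩ : ∃ k, q = k + 1 := ⟨q - 1, by have := hq.pos; omega⟩
  have key : ∀ n : ℕ, al (n : Fin (k + 1)) = al 0 := by
    intro n
    induction n with
    | zero => simp
    | succ n ih =>
      have h2 := h (n : Fin (k + 1))
      rw [finRotate_succ_apply] at h2
      rw [Nat.cast_add_one, h2, ih]
  intro i
  conv_lhs => rw [← Fin.cast_val_eq_self i]
  exact key i.val

lemma leftval_eq_one [NeZero q] (hp : p.Prime) (hq : q.Prime) (hne : p ≠ q)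
    {al : Fin q → Multiplicative (ZMod p)}
    (hsum : ∑ i, Multiplicative.toAdd (al i) = 0) (hconst : ∀ i, al i = al 0) :
    al = 1 := by
  haveI := Fact.mk hp
  have h0 : Multiplicative.toAdd (al 0) = 0 := by
    have hs : ∑ _i : Fin q, Multiplicative.toAdd (al 0) = 0 := by
      rw [← hsum]
      exact Finset.sum_congr rfl fun i _ => by rw [hconst i]
    rw [Finset.sum_const, Finset.card_univ, Fintype.card_fin, nsmul_eq_mul] at hs
    have hq0 : (q : ZMod p) ≠ 0 := by
      rw [Ne, ZMod.natCast_eq_zero_iff]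
      intro hdvd
      exact hne ((Nat.prime_dvd_prime_iff_eq hp hq).mp hdvd)
    exact (mul_eq_zero.mp hs).resolve_left hq0
  funext i
  rw [hconst i]
  exact Multiplicative.toAdd.injective (by simpa using h0)

lemma conj_fix (hp : p.Prime) (hq : q.Prime) (hne : p ≠ q) (g a : ↥(Hgrp p q))
    (ha : (a : Wreath p q).right = 1) (hg : (g : Wreath p q).right ≠ 1)
    (hfix : ↑g * ↑a * (↑g)⁻¹ = (a : Wreath p q)) : a = 1 := by
  set gr := (g : Wreath p q).right with hgr
  set al := (a : Wreath p q).left with hal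
  have h1 : wreathAct p q gr al = al := by
    have := (conj_eq (g := (g : Wreath p q)) ha).symm.trans hfix
    conv_rhs at this => rw [eq_inl_of_right_eq_one ha]
    exact SemidirectProduct.inl_injective this
  have h2 : ∀ i, al (gr i) = al i := by
    intro i
    conv_lhs => rw [← h1]
    show al (gr.symm (gr i)) = al i
    rw [Equiv.symm_apply_apply]
  have h3 : ∀ n : ℕ, ∀ i, al ((gr ^ n) i) = al i := by
    intro n
    induction n with
    | zero => intro i; rfl
    | succ n ih =>
      intro i
      rw [pow_succ, Equiv.Perm.mul_apply, ih, h2]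
  have hmem : gr ∈ Subgroup.zpowers (finRotate q) := g.2.2
  have hfr : finRotate q ∈ Subgroup.zpowers gr := by
    rw [zpowers_eq_of_ne_one hq hmem hg]
    exact Subgroup.mem_zpowers _
  obtain ⟨m, hm⟩ : ∃ m : ℕ, gr ^ m = finRotate q := by
    have : IsOfFinOrder gr := isOfFinOrder_of_finite gr
    exact this.mem_powers_iff_mem_zpowers.mpr hfr
  have h4 : ∀ i, al (finRotate q i) = al i := by
    intro i; rw [← hm]; exact h3 m i
  haveI : NeZero q := ⟨hq.ne_zero⟩
  have h5 := leftval_eq_one hp hq hne a.2.1 (invariant_const hq h4)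
  have : (a : Wreath p q) = 1 := by
    rw [eq_inl_of_right_eq_one ha, h5, map_one]
  exact Subtype.ext this

end Aux2
section Aux3

variable {p q : ℕ}

lemma right_coe_eq_one_of_mem_ker {a : ↥(Hgrp p q)} (ha : a ∈ (phiH p q).ker) :
    (a : Wreath p q).right = 1 := (mem_ker_phiH a).mp ha

lemma ker_comm' {u v : ↥(Hgrp p q)} (hu : u ∈ (phiH p q).ker) (hv : v ∈ (phiH p q).ker) :
    u * v = v * u :=
  Subtype.ext (ker_comm (right_coe_eq_one_of_mem_ker hu) (right_coe_eq_one_of_mem_ker hv))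

lemma commutator_mem_ker (g : ↥(Hgrp p q)) {a : ↥(Hgrp p q)} (ha : a ∈ (phiH p q).ker) :
    g * a * g⁻¹ * a⁻¹ ∈ (phiH p q).ker := by
  have ha' : phiH p q a = 1 := ha
  simp [MonoidHom.mem_ker, map_mul, map_inv, ha']

lemma conj_fix' (hp : p.Prime) (hq : q.Prime) (hne : p ≠ q) {g a : ↥(Hgrp p q)}
    (ha : a ∈ (phiH p q).ker) (hg : (g : Wreath p q).right ≠ 1)
    (hfix : g * a * g⁻¹ = a) : a = 1 := by
  refine conj_fix hp hq hne g a (right_coe_eq_one_of_mem_ker ha) hg ?_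
  have := congrArg (Subtype.val) hfix
  simpa using this

set_option maxHeartbeats 1000000 in
lemma exists_commutator (hp : p.Prime) (hq : q.Prime) (hne : p ≠ q) (g : ↥(Hgrp p q))
    (hg : (g : Wreath p q).right ≠ 1) {a' : ↥(Hgrp p q)} (ha' : a' ∈ (phiH p q).ker) :
    ∃ a ∈ (phiH p q).ker, g * a * g⁻¹ * a⁻¹ = a' := by
  haveI : Finite (Wreath p q) := finiteWreath hp.ne_zero
  let f : ↥(phiH p q).ker →* ↥(phiH p q).ker := MonoidHom.mk'
    (fun a => ⟨g * a.1 * g⁻¹ * a.1⁻¹, commutator_mem_ker g a.2⟩)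
    (by
      intro a b
      apply Subtype.ext
      show g * (a * b).1 * g⁻¹ * ((a * b).1)⁻¹ =
        (g * a.1 * g⁻¹ * a.1⁻¹) * (g * b.1 * g⁻¹ * b.1⁻¹)
      have hab : (a * b).1 = a.1 * b.1 := rfl
      have hw : (g * b.1 * g⁻¹ * b.1⁻¹ : ↥(Hgrp p q)) ∈ (phiH p q).ker :=
        commutator_mem_ker g b.2
      have hai : (a.1⁻¹ : ↥(Hgrp p q)) ∈ (phiH p q).ker := ((phiH p q).ker).inv_mem a.2
      calc g * (a * b).1 * g⁻¹ * ((a * b).1)⁻¹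
          = (g * a.1 * g⁻¹) * ((g * b.1 * g⁻¹ * b.1⁻¹) * a.1⁻¹) := by
            rw [hab]; group
        _ = (g * a.1 * g⁻¹) * (a.1⁻¹ * (g * b.1 * g⁻¹ * b.1⁻¹)) := by
            rw [ker_comm' hw hai]
        _ = (g * a.1 * g⁻¹ * a.1⁻¹) * (g * b.1 * g⁻¹ * b.1⁻¹) := by group)
  have hinj : Function.Injective f := by
    refine (injective_iff_map_eq_one f).mpr ?_
    intro a hfa
    have h1 : g * a.1 * g⁻¹ * (a.1)⁻¹ = 1 := congrArg Subtype.val hfa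
    have h2 : g * a.1 * g⁻¹ = a.1 := by
      rwa [mul_inv_eq_one] at h1
    exact Subtype.ext (conj_fix' hp hq hne a.2 hg h2)
  have hsurj : Function.Surjective f := Finite.surjective_of_injective hinj
  obtain ⟨a, hfa⟩ := hsurj ⟨a', ha'⟩
  exact ⟨a.1, a.2, congrArg Subtype.val hfa⟩

end Aux3
set_option maxHeartbeats 1000000 in
theorem stmt12 (p q : ℕ) (hp : p.Prime) (hq : q.Prime) (hop : Odd p)
    (hoq : Odd q) (hlt : p < q) (K : Subgroup ↥(Hgrp p q)) (hK : K ≠ ⊤)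
    (hdvd : q ∣ Nat.card K) :
    (∃ x : ↥(Hgrp p q), orderOf x = q ∧ K = Subgroup.zpowers x) ∨
    ∃ x : ↥(Hgrp p q), x ∈ K ∧ orderOf x = q ∧
      K.normalCore ⊔ Subgroup.zpowers x = K ∧
      K.normalCore ⊓ Subgroup.zpowers x = ⊥ ∧
      IsPGroup p K.normalCore ∧
      ∀ P : Sylow p ↥K, (P : Subgroup ↥K).map K.subtype = K.normalCore := by
  right
  haveI := Fact.mk hp
  haveI := Fact.mk hq
  haveI : Finite (Wreath p q) := finiteWreath hp.ne_zero
  have hne : p ≠ q := Nat.ne_of_lt hlt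
  -- Cauchy's theorem
  haveI : Fintype ↥K := Fintype.ofFinite _
  obtain ⟨y, hy⟩ := exists_prime_orderOf_dvd_card (G := ↥K) q
    (by rwa [← Nat.card_eq_fintype_card])
  set x : ↥(Hgrp p q) := y.1 with hxdef
  have hxK : x ∈ K := y.2
  have hordx : orderOf x = q := by
    rw [hxdef, Subgroup.orderOf_coe]; exact hy
  have hker_pow : ∀ z : ↥(Hgrp p q), z ∈ (phiH p q).ker → z ^ p = 1 := by
    intro z hz
    apply Subtype.ext
    show z.1 ^ p = 1
    exact pow_p_eq_one (right_coe_eq_one_of_mem_ker hz)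
  have hxright : (x : Wreath p q).right ≠ 1 := by
    intro h1
    have h2 := hker_pow x ((mem_ker_phiH x).mpr h1)
    have h3 : q ∣ p := hordx ▸ orderOf_dvd_of_pow_eq_one h2
    have := Nat.le_of_dvd hp.pos h3
    omega
  -- decomposition of any element relative to g with nontrivial right part
  have hdecomp : ∀ g : ↥(Hgrp p q), (g : Wreath p q).right ≠ 1 →
      ∀ h : ↥(Hgrp p q), ∃ n : ℕ, h * (g ^ n)⁻¹ ∈ (phiH p q).ker := by
    intro g hg h
    have hzp : Subgroup.zpowers (phiH p q g) = Subgroup.zpowers (finRotate q) :=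
      zpowers_eq_of_ne_one hq g.2.2 hg
    have hmem : phiH p q h ∈ Subgroup.zpowers (phiH p q g) := by
      rw [hzp]; exact h.2.2
    obtain ⟨n, hn⟩ := (isOfFinOrder_of_finite _).mem_powers_iff_mem_zpowers.mpr hmem
    refine ⟨n, ?_⟩
    simp only [MonoidHom.mem_ker, map_mul, map_inv, map_pow, hn]
    simp
  set N := K ⊓ (phiH p q).ker with hNdef
  have hNnormal : N.Normal := by
    constructor
    intro n hn h
    obtain ⟨hnK, hnker⟩ := Subgroup.mem_inf.mp hn
    obtain ⟨m, hm⟩ := hdecomp x hxright h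
    have hxm : x ^ m ∈ K := K.pow_mem hxK m
    have hcn : x ^ m * n * (x ^ m)⁻¹ ∈ N := by
      rw [hNdef, Subgroup.mem_inf]
      exact ⟨K.mul_mem (K.mul_mem hxm hnK) (K.inv_mem hxm),
        (MonoidHom.normal_ker (phiH p q)).conj_mem n hnker (x ^ m)⟩
    have hcnker : x ^ m * n * (x ^ m)⁻¹ ∈ (phiH p q).ker :=
      (Subgroup.mem_inf.mp hcn).2
    have heq : h * n * h⁻¹ = x ^ m * n * (x ^ m)⁻¹ := by
      have h_eq : h = (h * (x ^ m)⁻¹) * x ^ m := by group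
      calc h * n * h⁻¹
          = (h * (x ^ m)⁻¹) * (x ^ m * n * (x ^ m)⁻¹) * (h * (x ^ m)⁻¹)⁻¹ := by
            group
        _ = (x ^ m * n * (x ^ m)⁻¹) * (h * (x ^ m)⁻¹) * (h * (x ^ m)⁻¹)⁻¹ := by
            rw [ker_comm' hm hcnker]
        _ = x ^ m * n * (x ^ m)⁻¹ := by group
    rw [heq]
    exact hcn
  have hcore : K.normalCore = N := by
    apply le_antisymm
    · have hsub : K.normalCore ≤ (phiH p q).ker := by
        by_contra hcon
        rw [SetLike.le_def] at hcon
        push_neg at hcon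
        obtain ⟨g, hgcore, hgker⟩ := hcon
        have hgr : (g : Wreath p q).right ≠ 1 := fun h1 =>
          hgker ((mem_ker_phiH g).mpr h1)
        have hkerle : (phiH p q).ker ≤ K.normalCore := by
          intro a' ha'
          obtain ⟨a, _, hacomm⟩ := exists_commutator hp hq hne g hgr ha'
          rw [← hacomm]
          have h1 : a * g⁻¹ * a⁻¹ ∈ K.normalCore :=
            (Subgroup.normalCore_normal K).conj_mem g⁻¹
              (Subgroup.inv_mem _ hgcore) a
          have h2 : g * a * g⁻¹ * a⁻¹ = g * (a * g⁻¹ * a⁻¹) := by group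
          rw [h2]
          exact Subgroup.mul_mem _ hgcore h1
        exact hK (eq_top_iff.mpr (fun h _ => by
          obtain ⟨m, hm⟩ := hdecomp g hgr h
          have h3 : h = (h * (g ^ m)⁻¹) * g ^ m := by group
          rw [h3]
          exact K.mul_mem (K.normalCore_le (hkerle hm))
            (K.pow_mem (K.normalCore_le hgcore) m)))
      exact le_inf K.normalCore_le hsub
    · haveI := hNnormal
      exact Subgroup.normal_le_normalCore.mpr inf_le_left
  have hsup : N ⊔ Subgroup.zpowers x = K := by
    apply le_antisymm
    · exact sup_le inf_le_left (Subgroup.zpowers_le.mpr hxK)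
    · intro k hk
      obtain ⟨m, hm⟩ := hdecomp x hxright k
      have hw : k * (x ^ m)⁻¹ ∈ N := by
        rw [hNdef, Subgroup.mem_inf]
        exact ⟨K.mul_mem hk (K.inv_mem (K.pow_mem hxK m)), hm⟩
      have h3 : k = (k * (x ^ m)⁻¹) * x ^ m := by group
      rw [h3]
      exact Subgroup.mul_mem _ (Subgroup.mem_sup_left hw)
        (Subgroup.mem_sup_right
          (Subgroup.mem_zpowers_iff.mpr ⟨m, by rw [zpow_natCast]⟩))
  have hinf : N ⊓ Subgroup.zpowers x = ⊥ := by
    rw [eq_bot_iff]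
    intro z hz
    obtain ⟨hz1, hz2⟩ := Subgroup.mem_inf.mp hz
    have ho1 : orderOf z ∣ p :=
      orderOf_dvd_of_pow_eq_one (hker_pow z (Subgroup.mem_inf.mp hz1).2)
    have hxq : x ^ (q : ℤ) = 1 := by
      have h4 := pow_orderOf_eq_one x
      rw [hordx] at h4
      rw [zpow_natCast, h4]
    have ho2 : orderOf z ∣ q := by
      obtain ⟨m, hm⟩ := Subgroup.mem_zpowers_iff.mp hz2
      refine orderOf_dvd_of_pow_eq_one ?_
      rw [← hm, ← zpow_natCast, ← zpow_mul, mul_comm, zpow_mul, hxq, one_zpow]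
    have hco : Nat.Coprime p q := (Nat.coprime_primes hp hq).mpr hne
    have h5 := Nat.dvd_gcd ho1 ho2
    rw [Nat.Coprime] at hco
    rw [hco] at h5
    have h6 : z = 1 := orderOf_eq_one_iff.mp (Nat.dvd_one.mp h5)
    simp [h6]
  have hpgroup : IsPGroup p K.normalCore := by
    intro z
    refine ⟨1, ?_⟩
    have hz : z.1 ∈ (phiH p q).ker := by
      have h7 : z.1 ∈ N := by rw [← hcore]; exact z.2
      exact (Subgroup.mem_inf.mp (hNdef ▸ h7)).2
    apply Subtype.ext
    show z.1 ^ (p ^ 1) = 1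
    rw [pow_one]
    exact hker_pow z.1 hz
  have hsyl : ∀ P : Sylow p ↥K, (P : Subgroup ↥K).map K.subtype = K.normalCore := by
    intro P
    have hNK : K.normalCore ≤ K := K.normalCore_le
    set N' := K.normalCore.subgroupOf K with hN'def
    have hple : ∀ Q : Subgroup ↥K, IsPGroup p Q → Q ≤ N' := by
      intro Q hQ z hzQ
      obtain ⟨n, hn⟩ := hQ ⟨z, hzQ⟩
      have hz1 : z ^ (p ^ n) = (1 : ↥K) := by
        have := congrArg Subtype.val hn
        simpa using this
      have hz2 : z.1 ^ (p ^ n) = (1 : ↥(Hgrp p q)) := by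
        have := congrArg Subtype.val hz1
        simpa using this
      have hd1 : phiH p q z.1 ^ (p ^ n) = 1 := by rw [← map_pow, hz2, map_one]
      have hd2 : phiH p q z.1 ^ q = 1 := zpow_q_eq_one hq z.1.2.2
      have hphiz : phiH p q z.1 = 1 := by
        have o1 := orderOf_dvd_of_pow_eq_one hd1
        have o2 := orderOf_dvd_of_pow_eq_one hd2
        have hco : Nat.Coprime (p ^ n) q :=
          Nat.Coprime.pow_left n ((Nat.coprime_primes hp hq).mpr hne)
        have h8 := Nat.dvd_gcd o1 o2
        rw [Nat.Coprime] at hco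
        rw [hco] at h8
        exact orderOf_eq_one_iff.mp (Nat.dvd_one.mp h8)
      rw [hN'def, Subgroup.mem_subgroupOf, hcore, hNdef, Subgroup.mem_inf]
      exact ⟨z.2, hphiz⟩
    have hN'p : IsPGroup p N' := by
      intro z
      refine ⟨1, ?_⟩
      have hz : z.1.1 ∈ (phiH p q).ker := by
        have h9 : z.1.1 ∈ N := by
          rw [← hcore]
          exact Subgroup.mem_subgroupOf.mp z.2
        exact (Subgroup.mem_inf.mp (hNdef ▸ h9)).2
      apply Subtype.ext
      apply Subtype.ext
      show z.1.1 ^ (p ^ 1) = 1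
      rw [pow_one]
      exact hker_pow z.1.1 hz
    have hPN' : (P : Subgroup ↥K) ≤ N' := hple P P.isPGroup'
    have hPN : N' = P := P.is_maximal' hN'p hPN'
    rw [← hPN, hN'def, Subgroup.subgroupOf_map_subtype, inf_of_le_left hNK]
  exact ⟨x, hxK, hordx, by rw [hcore]; exact hsup, by rw [hcore]; exact hinf,
    hpgroup, hsyl⟩
end

section
/- Let p be an odd prime. Then the minimal faithful permutation degree of G(p,p,p) equals p², and likewise μ(A(p,p,p) ⋊ ⟨b⟩) = p² for b the p-cycle (1 2 ... p). -/
open Equiv Multiplicative Polynomial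

/-- transport of permutations along an equiv, as a monoid hom -/
def permMap {α β : Type*} (e : α ≃ β) : Equiv.Perm α →* Equiv.Perm β where
  toFun σ := (e.symm.trans σ).trans e
  map_one' := by ext x; simp
  map_mul' σ τ := by ext x; simp

lemma permMap_injective {α β : Type*} (e : α ≃ β) : Function.Injective (permMap e) := by
  intro σ τ h
  ext x
  have := congrArg (fun f : Equiv.Perm β => e.symm (f (e x))) h
  simpa [permMap] using this

/-- The permutation of `Fin q × ZMod p` induced by an element of the wreath product. -/
def bigPerm (p q : ℕ) (g : Wreath p q) : Equiv.Perm (Fin q × ZMod p) where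
  toFun x := (g.right x.1, toAdd (g.left (g.right x.1)) + x.2)
  invFun x := (g.right.symm x.1, x.2 - toAdd (g.left x.1))
  left_inv x := by simp
  right_inv x := by simp

/-- The faithful degree-`pq` permutation representation of the wreath product. -/
def Phi (p q : ℕ) : Wreath p q →* Equiv.Perm (Fin q × ZMod p) where
  toFun := bigPerm p q
  map_one' := by
    ext x
    · simp [bigPerm]
    · simp [bigPerm]
  map_mul' a b := by
    ext x
    · simp [bigPerm, SemidirectProduct.mul_right]
    · simp [bigPerm, SemidirectProduct.mul_left, SemidirectProduct.mul_right,
        wreathAct, permAut, add_assoc, MonoidHom.coe_mk, OneHom.coe_mk]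
      exact congrArg b.left (a.right.symm_apply_apply _)

lemma Phi_injective (p q : ℕ) : Function.Injective (Phi p q) := by
  rw [injective_iff_map_eq_one]
  intro g hg
  have hg' : bigPerm p q g = 1 := hg
  have h : ∀ x, bigPerm p q g x = x := fun x => by rw [hg']; rfl
  have hright : g.right = 1 := Equiv.ext fun i => congrArg Prod.fst (h (i, 0))
  have hleft : g.left = 1 := by
    funext i
    have h2 := congrArg Prod.snd (h (i, 0))
    simp only [bigPerm, Equiv.coe_fn_mk] at h2
    rw [hright] at h2
    simpa using h2
  ext <;> simp [hright, hleft]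

open Fin.NatCast in
lemma pow_finRotate_apply (m k : ℕ) (i : Fin (m + 1)) :
    ((finRotate (m + 1)) ^ k) i = i + (k : Fin (m + 1)) := by
  induction k with
  | zero => simp
  | succ k ih =>
    rw [pow_succ', Equiv.Perm.mul_apply, finRotate_succ_apply, ih]
    push_cast
    rw [add_assoc]

open Fin.NatCast in
lemma finRotate_pow_self (p : ℕ) (hp : p ≠ 0) : (finRotate p) ^ p = 1 := by
  obtain ⟨m, rfl⟩ := Nat.exists_eq_succ_of_ne_zero hp
  ext i
  rw [pow_finRotate_apply]
  simp [Fin.natCast_self]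

lemma wreath_base_pow (p q : ℕ) (a : Wreath p q) (ha : a.right = 1) : a ^ p = 1 := by
  have h1 : a = SemidirectProduct.inl a.left := by
    ext <;> simp [ha]
  have h2 : a.left ^ p = 1 := by
    funext i
    show (a.left i) ^ p = 1
    have : toAdd ((a.left i) ^ p) = 0 := by
      rw [toAdd_pow, nsmul_eq_mul, ZMod.natCast_self, zero_mul]
    calc (a.left i) ^ p = ofAdd (toAdd ((a.left i) ^ p)) := rfl
    _ = 1 := by rw [this]; rfl
  rw [h1, ← map_pow, h2, map_one]

lemma hgrp_pgroup (p : ℕ) (hp : p.Prime) : IsPGroup p ↥(Hgrp p p) := by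
  intro g
  refine ⟨2, ?_⟩
  have hr : ((g : Wreath p p).right) ^ p = 1 := by
    obtain ⟨k, hk⟩ := g.2.2
    rw [← hk, ← zpow_natCast, ← zpow_mul, mul_comm, zpow_mul, zpow_natCast,
      finRotate_pow_self p hp.ne_zero, one_zpow]
  have key : ((g : Wreath p p)) ^ (p ^ 2) = 1 := by
    rw [pow_two, pow_mul]
    refine wreath_base_pow p p _ ?_
    show SemidirectProduct.rightHom ((g : Wreath p p) ^ p) = 1
    rw [map_pow]
    exact hr
  have : ((g ^ (p ^ 2) : ↥(Hgrp p p)) : Wreath p p) = ((1 : ↥(Hgrp p p)) : Wreath p p) := by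
    push_cast
    rw [key]
  exact Subtype.ext this

lemma hgrp_ncomm (p : ℕ) (hp : p.Prime) (hop : Odd p) :
    ∃ g1 g2 : ↥(Hgrp p p), g1 * g2 ≠ g2 * g1 := by
  have hp2 : p ≠ 2 := by rintro rfl; simp [Nat.odd_iff] at hop
  have hp3 : 3 ≤ p := by have := hp.two_le; omega
  obtain ⟨m, rfl⟩ : ∃ m, p = m + 2 := ⟨p - 2, by omega⟩
  set q := m + 2 with hq
  have h01 : (0 : Fin q) ≠ 1 := Fin.zero_ne_one
  set w : Fin q → Multiplicative (ZMod q) :=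
    fun i => ofAdd (if i = 0 then 1 else if i = 1 then -1 else 0) with hw
  have hsum : ∑ i, toAdd (w i) = 0 := by
    have hrw : ∀ i : Fin q, toAdd (w i) =
        (if i = 0 then (1 : ZMod q) else 0) + (if i = 1 then (-1 : ZMod q) else 0) := by
      intro i
      show (if i = 0 then (1 : ZMod q) else if i = 1 then -1 else 0) = _
      split_ifs with h1 h2 <;> simp_all
    rw [Finset.sum_congr rfl fun i _ => hrw i, Finset.sum_add_distrib]
    rw [Finset.sum_ite_eq' Finset.univ (0 : Fin q) fun _ => (1 : ZMod q),
      Finset.sum_ite_eq' Finset.univ (1 : Fin q) fun _ => (-1 : ZMod q)]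
    simp
  refine ⟨⟨⟨1, finRotate q⟩, by simp, Subgroup.mem_zpowers _⟩,
    ⟨⟨w, 1⟩, hsum, Subgroup.one_mem _⟩, ?_⟩
  intro hc
  have hval := congrArg (fun g : ↥(Hgrp q q) => (g : Wreath q q).left 1) hc
  simp only [MulMemClass.coe_mul, SemidirectProduct.mul_left, Pi.mul_apply] at hval
  have hrot : (finRotate q).symm (1 : Fin q) = 0 := by
    rw [Equiv.symm_apply_eq]
    exact finRotate_apply_zero.symm
  have hL : ((1 : Fin q → Multiplicative (ZMod q)) *
      (wreathAct q q (finRotate q) w)) 1 = ofAdd 1 := by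
    simp only [Pi.mul_apply, Pi.one_apply, one_mul, wreathAct, permAut]
    show w ((finRotate q).symm 1) = ofAdd 1
    rw [hrot, hw]
    simp
  have hR : (w * (wreathAct q q (1 : Equiv.Perm (Fin q))
      (1 : Fin q → Multiplicative (ZMod q)))) 1 = ofAdd (-1) := by
    rw [map_one]
    simp only [Pi.mul_apply, MulAut.one_apply, Pi.one_apply, mul_one, hw]
    simp [h01.symm]
  have heq : ofAdd (1 : ZMod q) = ofAdd (-1 : ZMod q) := by
    rw [← hL, ← hR]
    simpa [Pi.mul_apply] using hval
  have h1 : (1 : ZMod q) = -1 := ofAdd.injective heq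
  have h2 : ((2 : ℕ) : ZMod q) = 0 := by push_cast; linear_combination h1
  have := Nat.le_of_dvd (by norm_num) ((CharP.cast_eq_zero_iff (ZMod q) q 2).mp h2)
  omega

lemma wreath_finite (p q : ℕ) [NeZero p] : Finite (Wreath p q) :=
  Finite.of_injective (fun g : Wreath p q => (g.left, g.right))
    (by rintro ⟨al, ar⟩ ⟨bl, br⟩ h
        simp only [Prod.mk.injEq] at h
        simp [h.1, h.2])

open scoped commutatorElement in
lemma hgrp_lower (p : ℕ) (hp : p.Prime) (hop : Odd p) (n : ℕ)
    (f : ↥(Hgrp p p) →* Equiv.Perm (Fin n)) (hf : Function.Injective f) : p ^ 2 ≤ n := by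
  by_contra hn
  push_neg at hn
  haveI : Fact p.Prime := ⟨hp⟩
  haveI : NeZero p := ⟨hp.ne_zero⟩
  haveI : Finite (Wreath p p) := wreath_finite p p
  letI := MulAction.compHom (Fin n) f
  have hH := hgrp_pgroup p hp
  have key : ∀ a : Fin n, commutator ↥(Hgrp p p) ≤ MulAction.stabilizer ↥(Hgrp p p) a := by
    intro a
    set S := MulAction.stabilizer ↥(Hgrp p p) a with hSdef
    obtain ⟨k, hk⟩ := hH.index S
    have hle : S.index ≤ n := by
      rw [MulAction.index_stabilizer]
      have := Set.ncard_le_ncard (Set.subset_univ (MulAction.orbit ↥(Hgrp p p) a))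
        Set.finite_univ
      simpa [Set.ncard_univ] using this
    have hk1 : k ≤ 1 := by
      by_contra hgt
      push_neg at hgt
      have : p ^ 2 ≤ p ^ k := Nat.pow_le_pow_right hp.pos hgt
      omega
    interval_cases k
    · have hS : S = ⊤ := Subgroup.index_eq_one.mp (by rw [hk, pow_zero])
      rw [hS]
      exact le_top
    · have hSp : S.index = p := by rw [hk, pow_one]
      set K := S.normalCore with hK
      obtain ⟨m, hm⟩ := hH.index K
      have hdvd : K.index ∣ Nat.factorial p := by
        have h2 : Nat.card (Equiv.Perm (↥(Hgrp p p) ⧸ S)) = Nat.factorial p := by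
          have hcq : Nat.card (↥(Hgrp p p) ⧸ S) = p := by
            rw [← Subgroup.index_eq_card, hSp]
          haveI : Fintype (↥(Hgrp p p) ⧸ S) := Fintype.ofFinite _
          rw [Nat.card_eq_fintype_card, Fintype.card_perm, ← Nat.card_eq_fintype_card, hcq]
        rw [hK, Subgroup.normalCore_eq_ker, Subgroup.index_ker, ← h2]
        exact Subgroup.card_subgroup_dvd_card _
      have hd : S.index ∣ K.index := Subgroup.index_dvd_of_le S.normalCore_le
      have hm1 : m = 1 := by
        have hm0 : 1 ≤ m := by
          by_contra h0
          push_neg at h0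
          interval_cases m
          · rw [hm, pow_zero, Nat.dvd_one, hSp] at hd
            exact hp.one_lt.ne' hd
        have hm2 : m ≤ 1 := by
          by_contra h2'
          push_neg at h2'
          have hpp : p ^ 2 ∣ Nat.factorial p := dvd_trans (by rw [hm]; exact pow_dvd_pow p h2') hdvd
          have hfac : Nat.factorial p = p * Nat.factorial (p - 1) := by
            have h := Nat.factorial_succ (p - 1)
            have hps : p - 1 + 1 = p := Nat.succ_pred_eq_of_pos hp.pos
            rw [hps] at h
            exact h
          rw [pow_two, hfac] at hpp
          have hd2 := (Nat.mul_dvd_mul_iff_left hp.pos).mp hpp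
          have hle2 := (Nat.Prime.dvd_factorial hp).mp hd2
          have := hp.two_le
          omega
        omega
      have hKp : K.index = p := by rw [hm, hm1, pow_one]
      have hrel : K.relIndex S * S.index = K.index := Subgroup.relIndex_mul_index S.normalCore_le
      have hrel1 : K.relIndex S = 1 := by
        rw [hKp, hSp] at hrel
        exact Nat.eq_of_mul_eq_mul_right hp.pos (by rw [hrel, one_mul])
      have hSK : S ≤ K := Subgroup.relIndex_eq_one.mp hrel1
      have hEq : K = S := le_antisymm S.normalCore_le hSK
      haveI hnorm : S.Normal := hEq ▸ S.normalCore_normal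
      have hcard : Nat.card (↥(Hgrp p p) ⧸ S) = p := by rw [← Subgroup.index_eq_card, hSp]
      haveI := isCyclic_of_prime_card hcard
      letI : CommGroup (↥(Hgrp p p) ⧸ S) := IsCyclic.commGroup
      have hcomm := Abelianization.commutator_subset_ker (QuotientGroup.mk' S)
      rwa [QuotientGroup.ker_mk'] at hcomm
  obtain ⟨g1, g2, hg⟩ := hgrp_ncomm p hp hop
  have hc : ⁅g1, g2⁆ ≠ 1 := fun h => hg (commutatorElement_eq_one_iff_mul_comm.mp h)
  have hmem : ⁅g1, g2⁆ ∈ commutator ↥(Hgrp p p) :=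
    Subgroup.commutator_mem_commutator (Subgroup.mem_top _) (Subgroup.mem_top _)
  have hfix : f ⁅g1, g2⁆ = 1 := by
    ext x
    have hx := key x hmem
    rw [MulAction.mem_stabilizer_iff] at hx
    exact congrArg Fin.val hx
  exact hc (hf (by rw [hfix, map_one]))

theorem stmt17 (p : ℕ) (hp : p.Prime) (hop : Odd p) :
    minDeg ↥(Gppq p p) = p ^ 2 ∧ minDeg ↥(Hgrp p p) = p ^ 2 := by
  haveI : Fact p.Prime := ⟨hp⟩
  haveI : NeZero p := ⟨hp.ne_zero⟩
  let e : Fin p × ZMod p ≃ Fin (p ^ 2) :=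
    ((Equiv.refl (Fin p)).prodCongr (Fintype.equivFinOfCardEq (ZMod.card p))).trans
      (finProdFinEquiv.trans (finCongr (by ring)))
  have hup : ∀ T : Subgroup (Wreath p p),
      ∃ f : ↥T →* Equiv.Perm (Fin (p ^ 2)), Function.Injective f := fun T =>
    ⟨(permMap e).comp ((Phi p p).comp T.subtype),
      (permMap_injective e).comp ((Phi_injective p p).comp T.subtype_injective)⟩
  have hle : Hgrp p p ≤ Gppq p p := fun g hg => hg.1
  unfold minDeg
  constructor
  · refine le_antisymm (Nat.sInf_le (hup _)) (le_csInf ⟨_, hup _⟩ ?_)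
    rintro n ⟨f, hf⟩
    exact hgrp_lower p hp hop n (f.comp (Subgroup.inclusion hle))
      (hf.comp (Subgroup.inclusion_injective hle))
  · refine le_antisymm (Nat.sInf_le (hup _)) (le_csInf ⟨_, hup _⟩ ?_)
    rintro n ⟨f, hf⟩
    exact hgrp_lower p hp hop n f hf
end
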